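/- Let Γ be the random bipartite graph, and let m, n ∈ ℕ with m, n > 2. There exists an integer s(m,n) such that for every f ∈ F(S_{l,r}(Γ)), if |dom(f) ∩ R_l| ≥ s(m,n) and |dom(f) ∩ R_r| ≥ s(m,n), then there exists an (m×n)-analysis of f. -/

import Mathlib

/-! Preamble: bipartite graphs, the random bipartite graph, side-preserving
permutation groups, switches, switch groups, and related notions. -/

/-- A bipartite graph on a vertex type `V`: the sides `left` and `right`
partition `V`, both sides are nonempty, and `adj` (the relation `P₁`) only holds
from `left` to `right`.  The relation `P₂` is the complement of `adj` on
`left × right`. -/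
structure BipartiteGraph (V : Type*) where
  left : Set V
  right : Set V
  adj : V → V → Prop
  left_nonempty : left.Nonempty
  right_nonempty : right.Nonempty
  union_eq : left ∪ right = Set.univ
  disjoint_sides : Disjoint left right
  adj_dom : ∀ a b, adj a b → a ∈ left ∧ b ∈ right

/-- The two sides of a bipartite graph. -/
inductive BSide : Type
  | l : BSide
  | r : BSide
deriving DecidableEq

namespace BipartiteGraph

variable {V : Type*} (Γ : BipartiteGraph V)

/-- The side of the graph indexed by an element of `BSide`. -/
def side : BSide → Set V
  | BSide.l => Γ.left
  | BSide.r => Γ.right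

/-- `Γ` is (isomorphic to) the random bipartite graph: it is countable, both
sides are infinite, and it satisfies the extension properties `Θₙ` for all `n`. -/
structure IsRandom : Prop where
  countable : Countable V
  left_infinite : Γ.left.Infinite
  right_infinite : Γ.right.Infinite
  ext_left : ∀ X₁ X₂ : Finset V, ↑X₁ ⊆ Γ.left → ↑X₂ ⊆ Γ.left → Disjoint X₁ X₂ →
      ∃ v ∈ Γ.right, (∀ x ∈ X₁, Γ.adj x v) ∧ (∀ x ∈ X₂, ¬ Γ.adj x v)
  ext_right : ∀ X₁ X₂ : Finset V, ↑X₁ ⊆ Γ.right → ↑X₂ ⊆ Γ.right → Disjoint X₁ X₂ →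
      ∃ v ∈ Γ.left, (∀ x ∈ X₁, Γ.adj v x) ∧ (∀ x ∈ X₂, ¬ Γ.adj v x)

/-- `Sym_{l,r}(Γ)`: the group of permutations of `V` preserving both sides. -/
def symLR : Subgroup (Equiv.Perm V) where
  carrier := {g | (∀ v, g v ∈ Γ.left ↔ v ∈ Γ.left) ∧ (∀ v, g v ∈ Γ.right ↔ v ∈ Γ.right)}
  one_mem' := ⟨fun _ => Iff.rfl, fun _ => Iff.rfl⟩
  mul_mem' := by
    rintro a b ⟨hal, har⟩ ⟨hbl, hbr⟩
    exact ⟨fun v => (hal (b v)).trans (hbl v), fun v => (har (b v)).trans (hbr v)⟩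
  inv_mem' := by
    rintro a ⟨hal, har⟩
    refine ⟨fun v => ?_, fun v => ?_⟩
    · have h := hal (a⁻¹ v); rw [show a (a⁻¹ v) = v from a.apply_symm_apply v] at h; exact h.symm
    · have h := har (a⁻¹ v); rw [show a (a⁻¹ v) = v from a.apply_symm_apply v] at h; exact h.symm

/-- The automorphism group of `Γ`: side-preserving permutations preserving `adj`
(and hence both cross-types). -/
def autGroup : Subgroup (Equiv.Perm V) where
  carrier := {g | g ∈ Γ.symLR ∧ ∀ a b, Γ.adj a b ↔ Γ.adj (g a) (g b)}
  one_mem' := ⟨Γ.symLR.one_mem, fun _ _ => Iff.rfl⟩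
  mul_mem' := by
    rintro a b ⟨ha, ha2⟩ ⟨hb, hb2⟩
    exact ⟨mul_mem ha hb, fun x y => (hb2 x y).trans (ha2 (b x) (b y))⟩
  inv_mem' := by
    rintro a ⟨ha, ha2⟩
    refine ⟨inv_mem ha, fun x y => ?_⟩
    have h := ha2 (a⁻¹ x) (a⁻¹ y)
    rw [show a (a⁻¹ x) = x from a.apply_symm_apply x,
      show a (a⁻¹ y) = y from a.apply_symm_apply y] at h
    exact h.symm

/-- A permutation `g` is a switch with respect to a set `A` if it preserves the
sides and, for every cross-edge `(a, b)`, the cross-type of `(a, b)` is preserved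
if and only if `|{a, b} ∩ A| ≠ 1`. -/
def IsSwitch (g : Equiv.Perm V) (A : Set V) : Prop :=
  g ∈ Γ.symLR ∧ ∀ a ∈ Γ.left, ∀ b ∈ Γ.right,
    ((Γ.adj a b ↔ Γ.adj (g a) (g b)) ↔ ({a, b} ∩ A : Set V).ncard ≠ 1)

/-- The restriction of a map `g` to a set `S` is a switch with respect to `A`:
the condition of `IsSwitch` holds for all cross-edges inside `S`. -/
def IsSwitchOn (g : V → V) (S : Set V) (A : Set V) : Prop :=
  ∀ a ∈ S ∩ Γ.left, ∀ b ∈ S ∩ Γ.right,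
    ((Γ.adj a b ↔ Γ.adj (g a) (g b)) ↔ ({a, b} ∩ A : Set V).ncard ≠ 1)

/-- The restriction of a map `g` to a set `S` is an isomorphism: `g` preserves
the cross-type of every cross-edge inside `S`. -/
def IsIsoOn (g : V → V) (S : Set V) : Prop :=
  ∀ a ∈ S ∩ Γ.left, ∀ b ∈ S ∩ Γ.right, (Γ.adj a b ↔ Γ.adj (g a) (g b))

end BipartiteGraph

/-- A subgroup of the full symmetric group is closed (in the topology of
pointwise convergence) iff it contains every permutation which agrees with some
member of the subgroup on each finite subset. -/
def IsClosedSubgroup {V : Type*} (G : Subgroup (Equiv.Perm V)) : Prop :=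
  ∀ g : Equiv.Perm V, (∀ F : Finset V, ∃ h ∈ G, ∀ x ∈ F, h x = g x) → g ∈ G

/-- The closed subgroup generated by a set of permutations: the intersection of
all closed subgroups containing the set. -/
def closedClosure {V : Type*} (S : Set (Equiv.Perm V)) : Subgroup (Equiv.Perm V) :=
  sInf {G : Subgroup (Equiv.Perm V) | IsClosedSubgroup G ∧ S ⊆ ↑G}

namespace BipartiteGraph

variable {V : Type*} (Γ : BipartiteGraph V)

/-- The switch group `S_X(Γ)`: the closed subgroup of `Sym_{l,r}(Γ)` generated
by `Aut(Γ)` together with all switches with respect to a single vertex `v ∈ R_i`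
for `i ∈ X`. -/
def switchGroup (X : Set BSide) : Subgroup (Equiv.Perm V) :=
  closedClosure ((Γ.autGroup : Set (Equiv.Perm V)) ∪
    {g | ∃ i ∈ X, ∃ v ∈ Γ.side i, Γ.IsSwitch g {v}})

/-- The group `S_X(Γ)* `: the closed subgroup generated by `S_X(Γ)` together with
a switch `ρ` with respect to the whole side `R_l`. -/
def switchGroupStar (X : Set BSide) : Subgroup (Equiv.Perm V) :=
  closedClosure ((Γ.switchGroup X : Set (Equiv.Perm V)) ∪ {g | Γ.IsSwitch g Γ.left})

/-- Membership in `Aut(Γ)*`, the group of side-preserving permutations which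
either preserve all cross-types on `R_l × R_r` or exchange all cross-types on
`R_l × R_r`. -/
def InAutStar (g : Equiv.Perm V) : Prop :=
  g ∈ Γ.symLR ∧
    ((∀ a ∈ Γ.left, ∀ b ∈ Γ.right, (Γ.adj a b ↔ Γ.adj (g a) (g b))) ∨
     (∀ a ∈ Γ.left, ∀ b ∈ Γ.right, (Γ.adj a b ↔ ¬ Γ.adj (g a) (g b))))

/-- The number of cross-edges of cross-type `P₁` inside the set `S`. -/
noncomputable def edgeCount (S : Set V) : ℕ :=
  {p : V × V | p.1 ∈ S ∧ p.2 ∈ S ∧ Γ.adj p.1 p.2}.ncard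

/-- `g` preserves the parity of cross-types on `S`: the number of `P₁`
cross-edges in `S` is even iff the number of `P₁` cross-edges in `g[S]` is even. -/
def PreservesParityOn (g : V → V) (S : Set V) : Prop :=
  Even (Γ.edgeCount S) ↔ Even (Γ.edgeCount (g '' S))

/-- An `(m × n)`-subgraph of `Γ`: a finite set of vertices with `m` vertices on
the left side and `n` vertices on the right side. -/
def IsMNSubgraph (S : Set V) (m n : ℕ) : Prop :=
  S.Finite ∧ (S ∩ Γ.left).ncard = m ∧ (S ∩ Γ.right).ncard = n

end BipartiteGraph

namespace BipartiteGraph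

/-- The composite `f_j ∘ f_{j-1} ∘ ... ∘ f_0` of an indexed family of
permutations. -/
def compSeq {V : Type*} (c : ℕ → Equiv.Perm V) : ℕ → V → V
  | 0 => fun x => c 0 x
  | j + 1 => fun x => c (j + 1) (compSeq c j x)

/-- An `(m × n)`-analysis of the restriction to the finite set `Z` of a member
`g` of `S_{l,r}(Γ)`: a finite sequence `f_0, ..., f_s` of members of
`F(S_{l,r}(Γ))` (each represented by a full group element `c j`, restricted to
the relevant set) such that
(1) `f_0 = θ ∘ (g ↾ Z)` for some `θ ∈ F(Aut(Γ)*)`;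
(2) for each `0 ≤ j ≤ s-1` there exist an `(m × n)`-subgraph `Y_j ⊆ Z` and
`θ_j ∈ S_{l,r}(Γ)` such that (a) `θ_j` is either an automorphism or a switch
with respect to some vertex `v_j ∈ Y_j`, (b) `θ_j ↾ Y_j = (f_j ∘ ... ∘ f_0) ↾ Y_j`,
and (c) `f_{j+1} = θ_j⁻¹ ↾ ran(f_j ∘ ... ∘ f_0)`;
(3) `f_s ∘ ... ∘ f_0 : Z → Γ` is an isomorphic embedding. -/
def HasMNAnalysis {V : Type*} (Γ : BipartiteGraph V) (g : Equiv.Perm V)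
    (Z : Finset V) (m n : ℕ) : Prop :=
  ∃ (s : ℕ) (c : ℕ → Equiv.Perm V),
    (∀ j ≤ s, c j ∈ Γ.switchGroup {BSide.l, BSide.r}) ∧
    (∃ θ : Equiv.Perm V, Γ.InAutStar θ ∧ ∀ x ∈ Z, c 0 x = θ (g x)) ∧
    (∀ j < s, ∃ Y : Finset V, Y ⊆ Z ∧
      ((Y : Set V) ∩ Γ.left).ncard = m ∧ ((Y : Set V) ∩ Γ.right).ncard = n ∧
      ∃ θj ∈ Γ.switchGroup {BSide.l, BSide.r},
        (θj ∈ Γ.autGroup ∨ ∃ v ∈ Y, Γ.IsSwitch θj {v}) ∧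
        (∀ x ∈ Y, θj x = compSeq c j x) ∧
        (∀ x ∈ Z, c (j + 1) (compSeq c j x) = θj⁻¹ (compSeq c j x))) ∧
    ((∀ x ∈ Z, (x ∈ Γ.left ↔ compSeq c s x ∈ Γ.left) ∧
        (x ∈ Γ.right ↔ compSeq c s x ∈ Γ.right)) ∧
      ∀ a ∈ (Z : Set V) ∩ Γ.left, ∀ b ∈ (Z : Set V) ∩ Γ.right,
        (Γ.adj a b ↔ Γ.adj (compSeq c s a) (compSeq c s b)))

end BipartiteGraph

/-! ### Auxiliary development for Theorem 4.2 -/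

@[simp]
theorem Equiv.Perm.inv_apply_self {α : Type*} (f : Equiv.Perm α) (x : α) : f⁻¹ (f x) = x :=
  f.symm_apply_apply x

@[simp]
theorem Equiv.Perm.apply_inv_self {α : Type*} (f : Equiv.Perm α) (x : α) : f (f⁻¹ x) = x :=
  f.apply_symm_apply x

namespace BipartiteGraph

variable {V : Type*} (Γ : BipartiteGraph V)

/-- The `A`-twisted adjacency: `adj a b` xor (`|{a,b} ∩ A| = 1`). -/
def adjT (A : Set V) (a b : V) : Prop := Γ.adj a b ↔ (a ∈ A ↔ b ∈ A)

/-- `σ` carries `Γ` to the `A`-twisted graph. -/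
def SwTo (σ : V → V) (A : Set V) : Prop :=
  ∀ a ∈ Γ.left, ∀ b ∈ Γ.right, (Γ.adj (σ a) (σ b) ↔ Γ.adjT A a b)

variable {Γ}

lemma ne_of_sides {a b : V} (ha : a ∈ Γ.left) (hb : b ∈ Γ.right) : a ≠ b :=
  fun h => Set.disjoint_left.mp Γ.disjoint_sides ha (h ▸ hb)

lemma mem_side_total (x : V) : x ∈ Γ.left ∨ x ∈ Γ.right := by
  have : x ∈ Γ.left ∪ Γ.right := by rw [Γ.union_eq]; trivial
  exact this

lemma not_right_of_left {x : V} (hx : x ∈ Γ.left) : x ∉ Γ.right :=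
  fun h => Set.disjoint_left.mp Γ.disjoint_sides hx h

lemma not_left_of_right {x : V} (hx : x ∈ Γ.right) : x ∉ Γ.left :=
  fun h => Set.disjoint_left.mp Γ.disjoint_sides h hx

lemma ncard_pair_inter_ne_one {a b : V} (hab : a ≠ b) (A : Set V) :
    (({a, b} : Set V) ∩ A).ncard ≠ 1 ↔ (a ∈ A ↔ b ∈ A) := by
  by_cases ha : a ∈ A <;> by_cases hb : b ∈ A
  · have h : ({a, b} : Set V) ∩ A = {a, b} := by
      apply Set.inter_eq_left.mpr; intro x hx
      rcases hx with rfl | rfl; exacts [ha, hb]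
    rw [h, Set.ncard_pair hab]; simp [ha, hb]
  · have h : ({a, b} : Set V) ∩ A = {a} := by
      ext x; constructor
      · rintro ⟨hx1 | hx1, hx2⟩
        · exact hx1 ▸ rfl
        · exact absurd (hx1 ▸ hx2) hb
      · rintro rfl; exact ⟨Or.inl rfl, ha⟩
    rw [h, Set.ncard_singleton]; simp [ha, hb]
  · have h : ({a, b} : Set V) ∩ A = {b} := by
      ext x; constructor
      · rintro ⟨hx1 | hx1, hx2⟩
        · exact absurd (hx1 ▸ hx2) ha
        · exact hx1 ▸ rfl
      · rintro rfl; exact ⟨Or.inr rfl, hb⟩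
    rw [h, Set.ncard_singleton]; simp [ha, hb]
  · have h : ({a, b} : Set V) ∩ A = ∅ := by
      ext x; simp only [Set.mem_inter_iff, Set.mem_insert_iff, Set.mem_singleton_iff,
        Set.mem_empty_iff_false, iff_false, not_and]
      rintro (rfl | rfl) <;> assumption
    rw [h, Set.ncard_empty]; simp [ha, hb]

lemma isSwitch_iff {g : Equiv.Perm V} {A : Set V} :
    Γ.IsSwitch g A ↔ g ∈ Γ.symLR ∧ Γ.SwTo g A := by
  constructor
  · rintro ⟨h1, h2⟩
    refine ⟨h1, fun a ha b hb => ?_⟩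
    have := (h2 a ha b hb).trans (ncard_pair_inter_ne_one (ne_of_sides ha hb) A)
    unfold BipartiteGraph.adjT; tauto
  · rintro ⟨h1, h2⟩
    refine ⟨h1, fun a ha b hb => ?_⟩
    rw [ncard_pair_inter_ne_one (ne_of_sides ha hb) A]
    have := h2 a ha b hb
    unfold BipartiteGraph.adjT at this; tauto

lemma closedClosure_le {S : Set (Equiv.Perm V)} {G : Subgroup (Equiv.Perm V)}
    (h1 : IsClosedSubgroup G) (h2 : S ⊆ ↑G) : closedClosure S ≤ G :=
  sInf_le ⟨h1, h2⟩

lemma subset_closedClosure {S : Set (Equiv.Perm V)} : S ⊆ ↑(closedClosure S) := by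
  intro g hg
  rw [SetLike.mem_coe, closedClosure, Subgroup.mem_sInf]
  exact fun G hG => hG.2 hg

lemma isClosed_symLR : IsClosedSubgroup Γ.symLR := by
  intro g hg
  constructor <;> intro v <;>
  · obtain ⟨h, hh, hhv⟩ := hg {v}
    have := hhv v (Finset.mem_singleton_self v)
    constructor <;> intro hv
    · first
      | exact (hh.1 v).mp (this ▸ hv)
      | exact (hh.2 v).mp (this ▸ hv)
    · first
      | exact this ▸ ((hh.1 v).mpr hv)
      | exact this ▸ ((hh.2 v).mpr hv)

lemma switchGroup_le_symLR (X : Set BSide) : Γ.switchGroup X ≤ Γ.symLR := by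
  apply closedClosure_le isClosed_symLR
  rintro g (hg | hg)
  · exact hg.1
  · obtain ⟨i, _, v, _, hsw⟩ := hg
    exact hsw.1

lemma mem_switchGroup_of_approx {X : Set BSide} {σ : Equiv.Perm V}
    (h : ∀ F : Finset V, ∃ h ∈ Γ.switchGroup X, ∀ x ∈ F, h x = σ x) :
    σ ∈ Γ.switchGroup X := by
  rw [switchGroup, closedClosure, Subgroup.mem_sInf]
  intro G hG
  refine hG.1 σ (fun F => ?_)
  obtain ⟨h', hh', hagree⟩ := h F
  have hle : Γ.switchGroup X ≤ G := sInf_le hG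
  exact ⟨h', hle hh', hagree⟩

lemma autGroup_le_switchGroup (X : Set BSide) : Γ.autGroup ≤ Γ.switchGroup X :=
  fun g hg => subset_closedClosure (Or.inl hg)

lemma singleton_switch_mem_switchGroup {g : Equiv.Perm V} {v : V}
    (hsw : Γ.IsSwitch g {v}) : g ∈ Γ.switchGroup {BSide.l, BSide.r} := by
  apply subset_closedClosure
  right
  rcases mem_side_total (Γ := Γ) v with hv | hv
  · exact ⟨BSide.l, by simp, v, hv, hsw⟩
  · exact ⟨BSide.r, by simp, v, hv, hsw⟩

lemma ext_left_avoid (hΓ : Γ.IsRandom) (S X₁ X₂ : Finset V)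
    (h1 : ↑X₁ ⊆ Γ.left) (h2 : ↑X₂ ⊆ Γ.left) (hd : Disjoint X₁ X₂) :
    ∃ v ∈ Γ.right, v ∉ S ∧ (∀ x ∈ X₁, Γ.adj x v) ∧ (∀ x ∈ X₂, ¬ Γ.adj x v) := by
  classical
  induction S using Finset.induction_on generalizing X₁ X₂ with
  | empty =>
    obtain ⟨v, hv, ha, hb⟩ := hΓ.ext_left X₁ X₂ h1 h2 hd
    exact ⟨v, hv, by simp, ha, hb⟩
  | @insert s S' hs IH =>
    have hinf : (Γ.left \ ↑(X₁ ∪ X₂)).Infinite :=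
      hΓ.left_infinite.diff (X₁ ∪ X₂).finite_toSet
    obtain ⟨x₀, hx₀l, hx₀n⟩ := hinf.nonempty
    rw [Finset.coe_union, Set.mem_union] at hx₀n
    push_neg at hx₀n
    by_cases hadj : Γ.adj x₀ s
    · obtain ⟨v, hv, hvS, hp1, hp2⟩ := IH X₁ (insert x₀ X₂) h1
        (by rw [Finset.coe_insert]; exact Set.insert_subset hx₀l h2)
        (by rw [Finset.disjoint_insert_right]; exact ⟨fun h => hx₀n.1 h, hd⟩)
      refine ⟨v, hv, ?_, hp1, fun x hx => hp2 x (Finset.mem_insert_of_mem hx)⟩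
      simp only [Finset.mem_insert]
      rintro (rfl | hvS')
      · exact hp2 x₀ (Finset.mem_insert_self _ _) hadj
      · exact hvS hvS'
    · obtain ⟨v, hv, hvS, hp1, hp2⟩ := IH (insert x₀ X₁) X₂
        (by rw [Finset.coe_insert]; exact Set.insert_subset hx₀l h1) h2
        (by rw [Finset.disjoint_insert_left]; exact ⟨fun h => hx₀n.2 h, hd⟩)
      refine ⟨v, hv, ?_, fun x hx => hp1 x (Finset.mem_insert_of_mem hx), hp2⟩
      simp only [Finset.mem_insert]
      rintro (rfl | hvS')
      · exact hadj (hp1 x₀ (Finset.mem_insert_self _ _))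
      · exact hvS hvS'

lemma ext_right_avoid (hΓ : Γ.IsRandom) (S X₁ X₂ : Finset V)
    (h1 : ↑X₁ ⊆ Γ.right) (h2 : ↑X₂ ⊆ Γ.right) (hd : Disjoint X₁ X₂) :
    ∃ v ∈ Γ.left, v ∉ S ∧ (∀ x ∈ X₁, Γ.adj v x) ∧ (∀ x ∈ X₂, ¬ Γ.adj v x) := by
  classical
  induction S using Finset.induction_on generalizing X₁ X₂ with
  | empty =>
    obtain ⟨v, hv, ha, hb⟩ := hΓ.ext_right X₁ X₂ h1 h2 hd
    exact ⟨v, hv, by simp, ha, hb⟩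
  | @insert s S' hs IH =>
    have hinf : (Γ.right \ ↑(X₁ ∪ X₂)).Infinite :=
      hΓ.right_infinite.diff (X₁ ∪ X₂).finite_toSet
    obtain ⟨x₀, hx₀l, hx₀n⟩ := hinf.nonempty
    rw [Finset.coe_union, Set.mem_union] at hx₀n
    push_neg at hx₀n
    by_cases hadj : Γ.adj s x₀
    · obtain ⟨v, hv, hvS, hp1, hp2⟩ := IH X₁ (insert x₀ X₂) h1
        (by rw [Finset.coe_insert]; exact Set.insert_subset hx₀l h2)
        (by rw [Finset.disjoint_insert_right]; exact ⟨fun h => hx₀n.1 h, hd⟩)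
      refine ⟨v, hv, ?_, hp1, fun x hx => hp2 x (Finset.mem_insert_of_mem hx)⟩
      simp only [Finset.mem_insert]
      rintro (rfl | hvS')
      · exact hp2 x₀ (Finset.mem_insert_self _ _) hadj
      · exact hvS hvS'
    · obtain ⟨v, hv, hvS, hp1, hp2⟩ := IH (insert x₀ X₁) X₂
        (by rw [Finset.coe_insert]; exact Set.insert_subset hx₀l h1) h2
        (by rw [Finset.disjoint_insert_left]; exact ⟨fun h => hx₀n.2 h, hd⟩)
      refine ⟨v, hv, ?_, fun x hx => hp1 x (Finset.mem_insert_of_mem hx), hp2⟩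
      simp only [Finset.mem_insert]
      rintro (rfl | hvS')
      · exact hadj (hp1 x₀ (Finset.mem_insert_self _ _))
      · exact hvS hvS'

variable (Γ) in
/-- The twisted extension property with avoidance, for the `A`-twisted graph. -/
def ExtTw (A : Set V) : Prop :=
  (∀ S X₁ X₂ : Finset V, ↑X₁ ⊆ Γ.right → ↑X₂ ⊆ Γ.right → Disjoint X₁ X₂ →
    ∃ v ∈ Γ.left, v ∉ S ∧ (∀ x ∈ X₁, Γ.adjT A v x) ∧ (∀ x ∈ X₂, ¬ Γ.adjT A v x)) ∧
  (∀ S X₁ X₂ : Finset V, ↑X₁ ⊆ Γ.left → ↑X₂ ⊆ Γ.left → Disjoint X₁ X₂ →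
    ∃ v ∈ Γ.right, v ∉ S ∧ (∀ x ∈ X₁, Γ.adjT A x v) ∧ (∀ x ∈ X₂, ¬ Γ.adjT A x v))

lemma adjT_empty {a b : V} : Γ.adjT (∅ : Set V) a b ↔ Γ.adj a b := by
  simp [BipartiteGraph.adjT]

lemma extTw_empty (hΓ : Γ.IsRandom) : Γ.ExtTw (∅ : Set V) := by
  constructor
  · intro S X₁ X₂ h1 h2 hd
    obtain ⟨v, hv, hvS, hp1, hp2⟩ := ext_right_avoid hΓ S X₁ X₂ h1 h2 hd
    exact ⟨v, hv, hvS, fun x hx => adjT_empty.mpr (hp1 x hx),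
      fun x hx h => hp2 x hx (adjT_empty.mp h)⟩
  · intro S X₁ X₂ h1 h2 hd
    obtain ⟨v, hv, hvS, hp1, hp2⟩ := ext_left_avoid hΓ S X₁ X₂ h1 h2 hd
    exact ⟨v, hv, hvS, fun x hx => adjT_empty.mpr (hp1 x hx),
      fun x hx h => hp2 x hx (adjT_empty.mp h)⟩

lemma extTw_left (hΓ : Γ.IsRandom) : Γ.ExtTw Γ.left := by
  constructor
  · intro S X₁ X₂ h1 h2 hd
    obtain ⟨v, hv, hvS, hp1, hp2⟩ := ext_right_avoid hΓ S X₂ X₁ h2 h1 hd.symm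
    refine ⟨v, hv, hvS, fun x hx => ?_, fun x hx h => ?_⟩
    · have hxr : x ∈ Γ.right := h1 hx
      have : ¬ Γ.adj v x := hp2 x hx
      simp only [BipartiteGraph.adjT]
      simp [hv, not_left_of_right hxr, this]
    · have hxr : x ∈ Γ.right := h2 hx
      have hadj : Γ.adj v x := hp1 x hx
      simp only [BipartiteGraph.adjT] at h
      simp [hv, not_left_of_right hxr, hadj] at h
  · intro S X₁ X₂ h1 h2 hd
    obtain ⟨v, hv, hvS, hp1, hp2⟩ := ext_left_avoid hΓ S X₂ X₁ h2 h1 hd.symm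
    refine ⟨v, hv, hvS, fun x hx => ?_, fun x hx h => ?_⟩
    · have hxl : x ∈ Γ.left := h1 hx
      have : ¬ Γ.adj x v := hp2 x hx
      simp only [BipartiteGraph.adjT]
      simp [hxl, not_left_of_right hv, this]
    · have hxl : x ∈ Γ.left := h2 hx
      have hadj : Γ.adj x v := hp1 x hx
      simp only [BipartiteGraph.adjT] at h
      simp [hxl, not_left_of_right hv, hadj] at h

lemma extTw_singleton (hΓ : Γ.IsRandom) (w : V) : Γ.ExtTw ({w} : Set V) := by
  classical
  rcases mem_side_total (Γ := Γ) w with hw | hw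
  · -- w on the left
    constructor
    · -- seek v ∈ left; ensure v ≠ w by avoiding it
      intro S X₁ X₂ h1 h2 hd
      obtain ⟨v, hv, hvS, hp1, hp2⟩ := ext_right_avoid hΓ (insert w S) X₁ X₂ h1 h2 hd
      rw [Finset.mem_insert] at hvS
      push_neg at hvS
      refine ⟨v, hv, hvS.2, fun x hx => ?_, fun x hx h => ?_⟩
      · have hxr := h1 hx
        simp only [BipartiteGraph.adjT, Set.mem_singleton_iff]
        simp [hvS.1, (ne_of_sides hw hxr).symm, hp1 x hx]
      · have hxr := h2 hx
        simp only [BipartiteGraph.adjT, Set.mem_singleton_iff] at h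
        simp [hvS.1, (ne_of_sides hw hxr).symm, hp2 x hx] at h
    · -- seek v ∈ right; v ≠ w automatic; x's on left may equal w
      intro S X₁ X₂ h1 h2 hd
      set X₁' := (X₁.erase w) ∪ (X₂.filter (· = w)) with hX₁'
      set X₂' := (X₂.erase w) ∪ (X₁.filter (· = w)) with hX₂'
      have h1' : ↑X₁' ⊆ Γ.left := by
        intro x hx
        simp only [hX₁', Finset.coe_union, Set.mem_union, Finset.coe_erase,
          Set.mem_diff, Finset.coe_filter, Set.mem_setOf_eq] at hx
        rcases hx with ⟨hx, _⟩ | ⟨hx, _⟩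
        exacts [h1 hx, h2 hx]
      have h2' : ↑X₂' ⊆ Γ.left := by
        intro x hx
        simp only [hX₂', Finset.coe_union, Set.mem_union, Finset.coe_erase,
          Set.mem_diff, Finset.coe_filter, Set.mem_setOf_eq] at hx
        rcases hx with ⟨hx, _⟩ | ⟨hx, _⟩
        exacts [h2 hx, h1 hx]
      have hd' : Disjoint X₁' X₂' := by
        rw [Finset.disjoint_left]
        intro x hx hx'
        simp only [hX₁', hX₂', Finset.mem_union, Finset.mem_erase,
          Finset.mem_filter] at hx hx'
        rcases hx with ⟨hxw, hx1⟩ | ⟨hx2, rfl⟩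
        · rcases hx' with ⟨_, hx2⟩ | ⟨hx1', rfl⟩
          · exact Finset.disjoint_left.mp hd hx1 hx2
          · exact hxw rfl
        · rcases hx' with ⟨hxw, _⟩ | ⟨hx1', _⟩
          · exact hxw rfl
          · exact Finset.disjoint_left.mp hd hx1' hx2
      obtain ⟨v, hv, hvS, hp1, hp2⟩ := ext_left_avoid hΓ S X₁' X₂' h1' h2' hd'
      have hvw : v ≠ w := (ne_of_sides hw hv).symm
      refine ⟨v, hv, hvS, fun x hx => ?_, fun x hx h => ?_⟩
      · by_cases hxw : x = w
        · subst hxw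
          have : x ∈ X₂' := Finset.mem_union_right _ (Finset.mem_filter.mpr ⟨hx, rfl⟩)
          have hna := hp2 x this
          simp only [BipartiteGraph.adjT, Set.mem_singleton_iff]
          simp [hvw, hna]
        · have : x ∈ X₁' := Finset.mem_union_left _ (Finset.mem_erase.mpr ⟨hxw, hx⟩)
          have ha := hp1 x this
          simp only [BipartiteGraph.adjT, Set.mem_singleton_iff]
          simp [hvw, hxw, ha]
      · by_cases hxw : x = w
        · subst hxw
          have : x ∈ X₁' := Finset.mem_union_right _ (Finset.mem_filter.mpr ⟨hx, rfl⟩)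
          have ha := hp1 x this
          simp only [BipartiteGraph.adjT, Set.mem_singleton_iff] at h
          simp [hvw, ha] at h
        · have : x ∈ X₂' := Finset.mem_union_left _ (Finset.mem_erase.mpr ⟨hxw, hx⟩)
          have hna := hp2 x this
          simp only [BipartiteGraph.adjT, Set.mem_singleton_iff] at h
          simp [hvw, hxw, hna] at h
  · -- w on the right
    constructor
    · -- seek v ∈ left; v ≠ w automatic; x's on right may equal w
      intro S X₁ X₂ h1 h2 hd
      set X₁' := (X₁.erase w) ∪ (X₂.filter (· = w)) with hX₁'
      set X₂' := (X₂.erase w) ∪ (X₁.filter (· = w)) with hX₂'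
      have h1' : ↑X₁' ⊆ Γ.right := by
        intro x hx
        simp only [hX₁', Finset.coe_union, Set.mem_union, Finset.coe_erase,
          Set.mem_diff, Finset.coe_filter, Set.mem_setOf_eq] at hx
        rcases hx with ⟨hx, _⟩ | ⟨hx, _⟩
        exacts [h1 hx, h2 hx]
      have h2' : ↑X₂' ⊆ Γ.right := by
        intro x hx
        simp only [hX₂', Finset.coe_union, Set.mem_union, Finset.coe_erase,
          Set.mem_diff, Finset.coe_filter, Set.mem_setOf_eq] at hx
        rcases hx with ⟨hx, _⟩ | ⟨hx, _⟩
        exacts [h2 hx, h1 hx]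
      have hd' : Disjoint X₁' X₂' := by
        rw [Finset.disjoint_left]
        intro x hx hx'
        simp only [hX₁', hX₂', Finset.mem_union, Finset.mem_erase,
          Finset.mem_filter] at hx hx'
        rcases hx with ⟨hxw, hx1⟩ | ⟨hx2, rfl⟩
        · rcases hx' with ⟨_, hx2⟩ | ⟨hx1', rfl⟩
          · exact Finset.disjoint_left.mp hd hx1 hx2
          · exact hxw rfl
        · rcases hx' with ⟨hxw, _⟩ | ⟨hx1', _⟩
          · exact hxw rfl
          · exact Finset.disjoint_left.mp hd hx1' hx2
      obtain ⟨v, hv, hvS, hp1, hp2⟩ := ext_right_avoid hΓ S X₁' X₂' h1' h2' hd'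
      have hvw : v ≠ w := ne_of_sides hv hw
      refine ⟨v, hv, hvS, fun x hx => ?_, fun x hx h => ?_⟩
      · by_cases hxw : x = w
        · subst hxw
          have : x ∈ X₂' := Finset.mem_union_right _ (Finset.mem_filter.mpr ⟨hx, rfl⟩)
          have hna := hp2 x this
          simp only [BipartiteGraph.adjT, Set.mem_singleton_iff]
          simp [hvw, hna]
        · have : x ∈ X₁' := Finset.mem_union_left _ (Finset.mem_erase.mpr ⟨hxw, hx⟩)
          have ha := hp1 x this
          simp only [BipartiteGraph.adjT, Set.mem_singleton_iff]
          simp [hvw, hxw, ha]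
      · by_cases hxw : x = w
        · subst hxw
          have : x ∈ X₁' := Finset.mem_union_right _ (Finset.mem_filter.mpr ⟨hx, rfl⟩)
          have ha := hp1 x this
          simp only [BipartiteGraph.adjT, Set.mem_singleton_iff] at h
          simp [hvw, ha] at h
        · have : x ∈ X₂' := Finset.mem_union_left _ (Finset.mem_erase.mpr ⟨hxw, hx⟩)
          have hna := hp2 x this
          simp only [BipartiteGraph.adjT, Set.mem_singleton_iff] at h
          simp [hvw, hxw, hna] at h
    · -- seek v ∈ right; ensure v ≠ w by avoiding it
      intro S X₁ X₂ h1 h2 hd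
      obtain ⟨v, hv, hvS, hp1, hp2⟩ := ext_left_avoid hΓ (insert w S) X₁ X₂ h1 h2 hd
      rw [Finset.mem_insert] at hvS
      push_neg at hvS
      refine ⟨v, hv, hvS.2, fun x hx => ?_, fun x hx h => ?_⟩
      · have hxl := h1 hx
        simp only [BipartiteGraph.adjT, Set.mem_singleton_iff]
        simp [hvS.1, ne_of_sides hxl hw, hp1 x hx]
      · have hxl := h2 hx
        simp only [BipartiteGraph.adjT, Set.mem_singleton_iff] at h
        simp [hvS.1, ne_of_sides hxl hw, hp2 x hx] at h

/-- A finite partial isomorphism from `Γ` to the `A`-twisted graph. -/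
structure PartIso {V : Type*} (Γ : BipartiteGraph V) (A : Set V) where
  D : Finset V
  f : V → V
  inj : Set.InjOn f ↑D
  sideL : ∀ x ∈ D, (x ∈ Γ.left ↔ f x ∈ Γ.left)
  sideR : ∀ x ∈ D, (x ∈ Γ.right ↔ f x ∈ Γ.right)
  iso : ∀ a ∈ D, a ∈ Γ.left → ∀ b ∈ D, b ∈ Γ.right →
    (Γ.adj (f a) (f b) ↔ Γ.adjT A a b)

lemma extend_dom (hΓ : Γ.IsRandom) {A : Set V} (P : PartIso Γ A) (x : V) :
    ∃ Q : PartIso Γ A, P.D ⊆ Q.D ∧ (∀ z ∈ P.D, Q.f z = P.f z) ∧ x ∈ Q.D := by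
  classical
  by_cases hx : x ∈ P.D
  · exact ⟨P, le_refl _, fun z _ => rfl, hx⟩
  rcases mem_side_total (Γ := Γ) x with hxl | hxr
  · -- x on the left : find an image for x on the left
    set Dr := P.D.filter (· ∈ Γ.right) with hDr
    set X₁ := (Dr.filter (fun b => Γ.adjT A x b)).image P.f with hX₁
    set X₂ := (Dr.filter (fun b => ¬ Γ.adjT A x b)).image P.f with hX₂
    have hmemDr : ∀ b ∈ Dr, b ∈ P.D ∧ b ∈ Γ.right := fun b hb => Finset.mem_filter.mp hb
    have h1 : ↑X₁ ⊆ Γ.right := by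
      intro y hy
      simp only [hX₁, Finset.coe_image, Set.mem_image, Finset.mem_coe,
        Finset.mem_filter] at hy
      obtain ⟨b, ⟨hb, _⟩, rfl⟩ := hy
      exact (P.sideR b (hmemDr b hb).1).mp (hmemDr b hb).2
    have h2 : ↑X₂ ⊆ Γ.right := by
      intro y hy
      simp only [hX₂, Finset.coe_image, Set.mem_image, Finset.mem_coe,
        Finset.mem_filter] at hy
      obtain ⟨b, ⟨hb, _⟩, rfl⟩ := hy
      exact (P.sideR b (hmemDr b hb).1).mp (hmemDr b hb).2
    have hd : Disjoint X₁ X₂ := by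
      rw [Finset.disjoint_left]
      intro y hy1 hy2
      simp only [hX₁, hX₂, Finset.mem_image, Finset.mem_filter] at hy1 hy2
      obtain ⟨b, ⟨hb, hab⟩, rfl⟩ := hy1
      obtain ⟨b', ⟨hb', hab'⟩, heq⟩ := hy2
      have : b' = b := P.inj (hmemDr b' hb').1 (hmemDr b hb).1 heq
      exact hab' (this ▸ hab)
    obtain ⟨y, hyl, hyS, hp1, hp2⟩ := ext_right_avoid hΓ (P.D.image P.f) X₁ X₂ h1 h2 hd
    refine ⟨⟨insert x P.D, Function.update P.f x y, ?_, ?_, ?_, ?_⟩,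
      Finset.subset_insert _ _, fun z hz => Function.update_of_ne (fun h : z = x => hx (h ▸ hz)) _ _,
      Finset.mem_insert_self _ _⟩
    · -- injectivity
      intro a ha b hb hab
      simp only [Finset.coe_insert, Set.mem_insert_iff, Finset.mem_coe] at ha hb
      rcases ha with rfl | ha <;> rcases hb with rfl | hb
      · rfl
      · rw [Function.update_self, Function.update_of_ne (ne_of_mem_of_not_mem hb hx)] at hab
        exact absurd (hab ▸ Finset.mem_image_of_mem P.f hb) hyS
      · rw [Function.update_self, Function.update_of_ne (ne_of_mem_of_not_mem ha hx)] at hab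
        exact absurd (hab ▸ Finset.mem_image_of_mem P.f ha) hyS
      · rw [Function.update_of_ne (ne_of_mem_of_not_mem ha hx),
          Function.update_of_ne (ne_of_mem_of_not_mem hb hx)] at hab
        exact P.inj ha hb hab
    · -- left side
      intro z hz
      rcases Finset.mem_insert.mp hz with rfl | hz
      · rw [Function.update_self]
        exact iff_of_true hxl hyl
      · rw [Function.update_of_ne (ne_of_mem_of_not_mem hz hx)]
        exact P.sideL z hz
    · -- right side
      intro z hz
      rcases Finset.mem_insert.mp hz with rfl | hz
      · rw [Function.update_self]
        exact iff_of_false (not_right_of_left hxl) (not_right_of_left hyl)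
      · rw [Function.update_of_ne (ne_of_mem_of_not_mem hz hx)]
        exact P.sideR z hz
    · -- iso
      intro a ha hal b hb hbr
      have hbx : b ≠ x := fun h => (not_right_of_left hxl) (h ▸ hbr)
      have hbD : b ∈ P.D := by
        rcases Finset.mem_insert.mp hb with rfl | hb'
        · exact absurd rfl hbx
        · exact hb'
      rw [Function.update_of_ne hbx]
      rcases Finset.mem_insert.mp ha with rfl | haD
      · rw [Function.update_self]
        have hbDr : b ∈ Dr := Finset.mem_filter.mpr ⟨hbD, hbr⟩
        by_cases hadj : Γ.adjT A a b
        · have : P.f b ∈ X₁ :=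
            Finset.mem_image_of_mem _ (Finset.mem_filter.mpr ⟨hbDr, hadj⟩)
          exact iff_of_true (hp1 _ this) hadj
        · have : P.f b ∈ X₂ :=
            Finset.mem_image_of_mem _ (Finset.mem_filter.mpr ⟨hbDr, hadj⟩)
          exact iff_of_false (hp2 _ this) hadj
      · rw [Function.update_of_ne (ne_of_mem_of_not_mem haD hx)]
        exact P.iso a haD hal b hbD hbr
  · -- x on the right : symmetric
    set Dl := P.D.filter (· ∈ Γ.left) with hDl
    set X₁ := (Dl.filter (fun a => Γ.adjT A a x)).image P.f with hX₁
    set X₂ := (Dl.filter (fun a => ¬ Γ.adjT A a x)).image P.f with hX₂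
    have hmemDl : ∀ b ∈ Dl, b ∈ P.D ∧ b ∈ Γ.left := fun b hb => Finset.mem_filter.mp hb
    have h1 : ↑X₁ ⊆ Γ.left := by
      intro y hy
      simp only [hX₁, Finset.coe_image, Set.mem_image, Finset.mem_coe,
        Finset.mem_filter] at hy
      obtain ⟨b, ⟨hb, _⟩, rfl⟩ := hy
      exact (P.sideL b (hmemDl b hb).1).mp (hmemDl b hb).2
    have h2 : ↑X₂ ⊆ Γ.left := by
      intro y hy
      simp only [hX₂, Finset.coe_image, Set.mem_image, Finset.mem_coe,
        Finset.mem_filter] at hy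
      obtain ⟨b, ⟨hb, _⟩, rfl⟩ := hy
      exact (P.sideL b (hmemDl b hb).1).mp (hmemDl b hb).2
    have hd : Disjoint X₁ X₂ := by
      rw [Finset.disjoint_left]
      intro y hy1 hy2
      simp only [hX₁, hX₂, Finset.mem_image, Finset.mem_filter] at hy1 hy2
      obtain ⟨b, ⟨hb, hab⟩, rfl⟩ := hy1
      obtain ⟨b', ⟨hb', hab'⟩, heq⟩ := hy2
      have : b' = b := P.inj (hmemDl b' hb').1 (hmemDl b hb).1 heq
      exact hab' (this ▸ hab)
    obtain ⟨y, hyr, hyS, hp1, hp2⟩ := ext_left_avoid hΓ (P.D.image P.f) X₁ X₂ h1 h2 hd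
    refine ⟨⟨insert x P.D, Function.update P.f x y, ?_, ?_, ?_, ?_⟩,
      Finset.subset_insert _ _, fun z hz => Function.update_of_ne (fun h : z = x => hx (h ▸ hz)) _ _,
      Finset.mem_insert_self _ _⟩
    · intro a ha b hb hab
      simp only [Finset.coe_insert, Set.mem_insert_iff, Finset.mem_coe] at ha hb
      rcases ha with rfl | ha <;> rcases hb with rfl | hb
      · rfl
      · rw [Function.update_self, Function.update_of_ne (ne_of_mem_of_not_mem hb hx)] at hab
        exact absurd (hab ▸ Finset.mem_image_of_mem P.f hb) hyS
      · rw [Function.update_self, Function.update_of_ne (ne_of_mem_of_not_mem ha hx)] at hab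
        exact absurd (hab ▸ Finset.mem_image_of_mem P.f ha) hyS
      · rw [Function.update_of_ne (ne_of_mem_of_not_mem ha hx),
          Function.update_of_ne (ne_of_mem_of_not_mem hb hx)] at hab
        exact P.inj ha hb hab
    · intro z hz
      rcases Finset.mem_insert.mp hz with rfl | hz
      · rw [Function.update_self]
        exact iff_of_false (not_left_of_right hxr) (not_left_of_right hyr)
      · rw [Function.update_of_ne (ne_of_mem_of_not_mem hz hx)]
        exact P.sideL z hz
    · intro z hz
      rcases Finset.mem_insert.mp hz with rfl | hz
      · rw [Function.update_self]
        exact iff_of_true hxr hyr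
      · rw [Function.update_of_ne (ne_of_mem_of_not_mem hz hx)]
        exact P.sideR z hz
    · intro a ha hal b hb hbr
      have hax : a ≠ x := fun h => (not_left_of_right hxr) (h ▸ hal)
      have haD : a ∈ P.D := by
        rcases Finset.mem_insert.mp ha with rfl | ha'
        · exact absurd rfl hax
        · exact ha'
      rw [Function.update_of_ne hax]
      rcases Finset.mem_insert.mp hb with rfl | hbD
      · rw [Function.update_self]
        have haDl : a ∈ Dl := Finset.mem_filter.mpr ⟨haD, hal⟩
        by_cases hadj : Γ.adjT A a b
        · have : P.f a ∈ X₁ :=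
            Finset.mem_image_of_mem _ (Finset.mem_filter.mpr ⟨haDl, hadj⟩)
          exact iff_of_true (hp1 _ this) hadj
        · have : P.f a ∈ X₂ :=
            Finset.mem_image_of_mem _ (Finset.mem_filter.mpr ⟨haDl, hadj⟩)
          exact iff_of_false (hp2 _ this) hadj
      · rw [Function.update_of_ne (ne_of_mem_of_not_mem hbD hx)]
        exact P.iso a haD hal b hbD hbr

lemma extend_ran (hΓ : Γ.IsRandom) {A : Set V} (hA : Γ.ExtTw A) (P : PartIso Γ A)
    (y : V) :
    ∃ Q : PartIso Γ A, P.D ⊆ Q.D ∧ (∀ z ∈ P.D, Q.f z = P.f z) ∧ ∃ u ∈ Q.D, Q.f u = y := by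
  classical
  by_cases hy : y ∈ P.D.image P.f
  · obtain ⟨u, hu, hfu⟩ := Finset.mem_image.mp hy
    exact ⟨P, le_refl _, fun z _ => rfl, u, hu, hfu⟩
  rcases mem_side_total (Γ := Γ) y with hyl | hyr
  · -- y on the left : find a preimage for y on the left
    set Dr := P.D.filter (· ∈ Γ.right) with hDr
    set X₁ := Dr.filter (fun b => Γ.adj y (P.f b)) with hX₁
    set X₂ := Dr.filter (fun b => ¬ Γ.adj y (P.f b)) with hX₂
    have hmemDr : ∀ b ∈ Dr, b ∈ P.D ∧ b ∈ Γ.right := fun b hb => Finset.mem_filter.mp hb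
    have h1 : ↑X₁ ⊆ Γ.right := by
      intro b hb
      simp only [hX₁, Finset.coe_filter, Set.mem_setOf_eq] at hb
      exact (hmemDr b hb.1).2
    have h2 : ↑X₂ ⊆ Γ.right := by
      intro b hb
      simp only [hX₂, Finset.coe_filter, Set.mem_setOf_eq] at hb
      exact (hmemDr b hb.1).2
    have hd : Disjoint X₁ X₂ := by
      rw [Finset.disjoint_left]
      intro b hb1 hb2
      simp only [hX₁, hX₂, Finset.mem_filter] at hb1 hb2
      exact hb2.2 hb1.2
    obtain ⟨u, hul, huS, hp1, hp2⟩ := hA.1 P.D X₁ X₂ h1 h2 hd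
    refine ⟨⟨insert u P.D, Function.update P.f u y, ?_, ?_, ?_, ?_⟩,
      Finset.subset_insert _ _, fun z hz => Function.update_of_ne (fun h : z = u => huS (h ▸ hz)) _ _,
      u, Finset.mem_insert_self _ _, Function.update_self u y P.f⟩
    · intro a ha b hb hab
      simp only [Finset.coe_insert, Set.mem_insert_iff, Finset.mem_coe] at ha hb
      rcases ha with rfl | ha <;> rcases hb with rfl | hb
      · rfl
      · rw [Function.update_self, Function.update_of_ne (ne_of_mem_of_not_mem hb huS)] at hab
        exact absurd (hab ▸ Finset.mem_image_of_mem P.f hb) hy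
      · rw [Function.update_self, Function.update_of_ne (ne_of_mem_of_not_mem ha huS)] at hab
        exact absurd (hab ▸ Finset.mem_image_of_mem P.f ha) hy
      · rw [Function.update_of_ne (ne_of_mem_of_not_mem ha huS),
          Function.update_of_ne (ne_of_mem_of_not_mem hb huS)] at hab
        exact P.inj ha hb hab
    · intro z hz
      rcases Finset.mem_insert.mp hz with rfl | hz
      · rw [Function.update_self]
        exact iff_of_true hul hyl
      · rw [Function.update_of_ne (ne_of_mem_of_not_mem hz huS)]
        exact P.sideL z hz
    · intro z hz
      rcases Finset.mem_insert.mp hz with rfl | hz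
      · rw [Function.update_self]
        exact iff_of_false (not_right_of_left hul) (not_right_of_left hyl)
      · rw [Function.update_of_ne (ne_of_mem_of_not_mem hz huS)]
        exact P.sideR z hz
    · intro a ha hal b hb hbr
      have hbu : b ≠ u := fun h => (not_right_of_left hul) (h ▸ hbr)
      have hbD : b ∈ P.D := by
        rcases Finset.mem_insert.mp hb with rfl | hb'
        · exact absurd rfl hbu
        · exact hb'
      rw [Function.update_of_ne hbu]
      rcases Finset.mem_insert.mp ha with rfl | haD
      · rw [Function.update_self]
        have hbDr : b ∈ Dr := Finset.mem_filter.mpr ⟨hbD, hbr⟩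
        by_cases hadj : Γ.adj y (P.f b)
        · exact iff_of_true hadj (hp1 b (Finset.mem_filter.mpr ⟨hbDr, hadj⟩))
        · exact iff_of_false hadj (hp2 b (Finset.mem_filter.mpr ⟨hbDr, hadj⟩))
      · rw [Function.update_of_ne (ne_of_mem_of_not_mem haD huS)]
        exact P.iso a haD hal b hbD hbr
  · -- y on the right : symmetric
    set Dl := P.D.filter (· ∈ Γ.left) with hDl
    set X₁ := Dl.filter (fun a => Γ.adj (P.f a) y) with hX₁
    set X₂ := Dl.filter (fun a => ¬ Γ.adj (P.f a) y) with hX₂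
    have hmemDl : ∀ b ∈ Dl, b ∈ P.D ∧ b ∈ Γ.left := fun b hb => Finset.mem_filter.mp hb
    have h1 : ↑X₁ ⊆ Γ.left := by
      intro b hb
      simp only [hX₁, Finset.coe_filter, Set.mem_setOf_eq] at hb
      exact (hmemDl b hb.1).2
    have h2 : ↑X₂ ⊆ Γ.left := by
      intro b hb
      simp only [hX₂, Finset.coe_filter, Set.mem_setOf_eq] at hb
      exact (hmemDl b hb.1).2
    have hd : Disjoint X₁ X₂ := by
      rw [Finset.disjoint_left]
      intro b hb1 hb2
      simp only [hX₁, hX₂, Finset.mem_filter] at hb1 hb2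
      exact hb2.2 hb1.2
    obtain ⟨u, hur, huS, hp1, hp2⟩ := hA.2 P.D X₁ X₂ h1 h2 hd
    refine ⟨⟨insert u P.D, Function.update P.f u y, ?_, ?_, ?_, ?_⟩,
      Finset.subset_insert _ _, fun z hz => Function.update_of_ne (fun h : z = u => huS (h ▸ hz)) _ _,
      u, Finset.mem_insert_self _ _, Function.update_self u y P.f⟩
    · intro a ha b hb hab
      simp only [Finset.coe_insert, Set.mem_insert_iff, Finset.mem_coe] at ha hb
      rcases ha with rfl | ha <;> rcases hb with rfl | hb
      · rfl
      · rw [Function.update_self, Function.update_of_ne (ne_of_mem_of_not_mem hb huS)] at hab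
        exact absurd (hab ▸ Finset.mem_image_of_mem P.f hb) hy
      · rw [Function.update_self, Function.update_of_ne (ne_of_mem_of_not_mem ha huS)] at hab
        exact absurd (hab ▸ Finset.mem_image_of_mem P.f ha) hy
      · rw [Function.update_of_ne (ne_of_mem_of_not_mem ha huS),
          Function.update_of_ne (ne_of_mem_of_not_mem hb huS)] at hab
        exact P.inj ha hb hab
    · intro z hz
      rcases Finset.mem_insert.mp hz with rfl | hz
      · rw [Function.update_self]
        exact iff_of_false (not_left_of_right hur) (not_left_of_right hyr)
      · rw [Function.update_of_ne (ne_of_mem_of_not_mem hz huS)]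
        exact P.sideL z hz
    · intro z hz
      rcases Finset.mem_insert.mp hz with rfl | hz
      · rw [Function.update_self]
        exact iff_of_true hur hyr
      · rw [Function.update_of_ne (ne_of_mem_of_not_mem hz huS)]
        exact P.sideR z hz
    · intro a ha hal b hb hbr
      have hau : a ≠ u := fun h => (not_left_of_right hur) (h ▸ hal)
      have haD : a ∈ P.D := by
        rcases Finset.mem_insert.mp ha with rfl | ha'
        · exact absurd rfl hau
        · exact ha'
      rw [Function.update_of_ne hau]
      rcases Finset.mem_insert.mp hb with rfl | hbD
      · rw [Function.update_self]
        have haDl : a ∈ Dl := Finset.mem_filter.mpr ⟨haD, hal⟩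
        by_cases hadj : Γ.adj (P.f a) y
        · exact iff_of_true hadj (hp1 a (Finset.mem_filter.mpr ⟨haDl, hadj⟩))
        · exact iff_of_false hadj (hp2 a (Finset.mem_filter.mpr ⟨haDl, hadj⟩))
      · rw [Function.update_of_ne (ne_of_mem_of_not_mem hbD huS)]
        exact P.iso a haD hal b hbD hbr

lemma extend_point (hΓ : Γ.IsRandom) {A : Set V} (hA : Γ.ExtTw A) (P : PartIso Γ A)
    (x : V) :
    ∃ Q : PartIso Γ A, P.D ⊆ Q.D ∧ (∀ z ∈ P.D, Q.f z = P.f z) ∧ x ∈ Q.D ∧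
      ∃ u ∈ Q.D, Q.f u = x := by
  obtain ⟨Q₁, hsub₁, hagr₁, hx₁⟩ := extend_dom hΓ P x
  obtain ⟨Q₂, hsub₂, hagr₂, u, hu, hfu⟩ := extend_ran hΓ hA Q₁ x
  exact ⟨Q₂, hsub₁.trans hsub₂, fun z hz => (hagr₂ z (hsub₁ hz)).trans (hagr₁ z hz),
    hsub₂ hx₁, u, hu, hfu⟩

/-- The back-and-forth limit: any finite partial isomorphism from `Γ` to the
`A`-twisted graph extends to a full permutation, provided the twisted extension
property holds. -/
lemma exists_perm_of_partIso (hΓ : Γ.IsRandom) {A : Set V} (hA : Γ.ExtTw A)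
    (P : PartIso Γ A) :
    ∃ σ : Equiv.Perm V, σ ∈ Γ.symLR ∧ (∀ z ∈ P.D, σ z = P.f z) ∧ Γ.SwTo σ A := by
  classical
  have : Nonempty V := ⟨Γ.left_nonempty.choose⟩
  have : Countable V := hΓ.countable
  obtain ⟨e, he⟩ := exists_surjective_nat V
  -- the increasing chain of partial isomorphisms
  let chain : ℕ → PartIso Γ A := fun k => Nat.rec P
    (fun k Pk => Classical.choose (extend_point hΓ hA Pk (e k))) k
  have hchain0 : chain 0 = P := rfl
  have hstep : ∀ k, (chain k).D ⊆ (chain (k + 1)).D ∧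
      (∀ z ∈ (chain k).D, (chain (k + 1)).f z = (chain k).f z) ∧
      e k ∈ (chain (k + 1)).D ∧ ∃ u ∈ (chain (k + 1)).D, (chain (k + 1)).f u = e k :=
    fun k => Classical.choose_spec (extend_point hΓ hA (chain k) (e k))
  have hagree : ∀ k j, k ≤ j → ∀ z ∈ (chain k).D,
      z ∈ (chain j).D ∧ (chain j).f z = (chain k).f z := by
    intro k j hkj
    induction j, hkj using Nat.le_induction with
    | base => exact fun z hz => ⟨hz, rfl⟩
    | succ j hkj IH =>
      intro z hz
      obtain ⟨hz', hf'⟩ := IH z hz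
      exact ⟨(hstep j).1 hz', ((hstep j).2.1 z hz').trans hf'⟩
  -- the limit function
  let ix : V → ℕ := fun x => Classical.choose (he x)
  have hix : ∀ x, e (ix x) = x := fun x => Classical.choose_spec (he x)
  have hmem : ∀ x, x ∈ (chain (ix x + 1)).D := fun x => by
    simpa only [hix x] using (hstep (ix x)).2.2.1
  let F : V → V := fun x => (chain (ix x + 1)).f x
  have hF : ∀ k (x : V), x ∈ (chain k).D → F x = (chain k).f x := by
    intro k x hx
    have h1 := hagree (ix x + 1) (max (ix x + 1) k) (le_max_left _ _) x (hmem x)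
    have h2 := hagree k (max (ix x + 1) k) (le_max_right _ _) x hx
    exact h1.2.symm.trans h2.2
  have hinj : Function.Injective F := by
    intro a b hab
    set k := max (ix a + 1) (ix b + 1) with hk
    have ha := (hagree (ix a + 1) k (le_max_left _ _) a (hmem a)).1
    have hb := (hagree (ix b + 1) k (le_max_right _ _) b (hmem b)).1
    have : (chain k).f a = (chain k).f b := by
      rw [← hF k a ha, ← hF k b hb]; exact hab
    exact (chain k).inj ha hb this
  have hsurj : Function.Surjective F := by
    intro y
    obtain ⟨u, hu, hfu⟩ := (hstep (ix y)).2.2.2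
    refine ⟨u, ?_⟩
    rw [hF (ix y + 1) u hu, hfu, hix]
  let σ : Equiv.Perm V := Equiv.ofBijective F ⟨hinj, hsurj⟩
  have hσ : ∀ x, σ x = F x := fun x => rfl
  refine ⟨σ, ⟨fun v => ?_, fun v => ?_⟩, fun z hz => ?_, fun a hal b hbr => ?_⟩
  · rw [hσ]
    exact ((chain (ix v + 1)).sideL v (hmem v)).symm
  · rw [hσ]
    exact ((chain (ix v + 1)).sideR v (hmem v)).symm
  · rw [hσ, hF 0 z hz]; rfl
  · set k := max (ix a + 1) (ix b + 1) with hk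
    have ha := (hagree (ix a + 1) k (le_max_left _ _) a (hmem a)).1
    have hb := (hagree (ix b + 1) k (le_max_right _ _) b (hmem b)).1
    rw [hσ, hσ, hF k a ha, hF k b hb]
    exact (chain k).iso a ha hal b hb hbr

lemma mem_autGroup_of {α : Equiv.Perm V} (hsym : α ∈ Γ.symLR)
    (h : ∀ a ∈ Γ.left, ∀ b ∈ Γ.right, (Γ.adj (α a) (α b) ↔ Γ.adj a b)) :
    α ∈ Γ.autGroup := by
  refine ⟨hsym, fun a b => ?_⟩
  by_cases ha : a ∈ Γ.left
  · by_cases hb : b ∈ Γ.right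
    · exact (h a ha b hb).symm
    · constructor
      · intro had; exact absurd (Γ.adj_dom a b had).2 hb
      · intro had
        exact absurd ((hsym.2 b).mp (Γ.adj_dom _ _ had).2) hb
  · constructor
    · intro had; exact absurd (Γ.adj_dom a b had).1 ha
    · intro had
      exact absurd ((hsym.1 a).mp (Γ.adj_dom _ _ had).1) ha

/-- The empty partial isomorphism. -/
def emptyPartIso (Γ : BipartiteGraph V) (A : Set V) : PartIso Γ A where
  D := ∅
  f := id
  inj := by simp
  sideL := by simp
  sideR := by simp
  iso := by simp

lemma iff_switch_step {q p qa qb ra rb : Prop} (h : q ↔ (p ↔ (qa ↔ qb)))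
    (hva : ra → ¬qa) (hvb : rb → ¬qb) :
    ((q ↔ (ra ↔ rb)) ↔ (p ↔ ((ra ∨ qa) ↔ (rb ∨ qb)))) := by tauto

/-- A global switch with respect to any finite set exists inside the switch
group. -/
lemma exists_global_switch (hΓ : Γ.IsRandom) (A : Finset V) :
    ∃ σ : Equiv.Perm V, σ ∈ Γ.switchGroup {BSide.l, BSide.r} ∧ σ ∈ Γ.symLR ∧
      Γ.SwTo σ ↑A := by
  classical
  induction A using Finset.induction_on with
  | empty =>
    refine ⟨1, Subgroup.one_mem _, Subgroup.one_mem _, fun a ha b hb => ?_⟩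
    simp [BipartiteGraph.adjT]
  | @insert v A₀ hv IH =>
    obtain ⟨σ₀, hσ₀G, hσ₀sym, hσ₀sw⟩ := IH
    obtain ⟨τ, hτsym, _, hτsw⟩ :=
      exists_perm_of_partIso hΓ (extTw_singleton hΓ (σ₀ v)) (emptyPartIso Γ {σ₀ v})
    have hτG : τ ∈ Γ.switchGroup {BSide.l, BSide.r} :=
      singleton_switch_mem_switchGroup (isSwitch_iff.mpr ⟨hτsym, hτsw⟩)
    refine ⟨τ * σ₀, mul_mem hτG hσ₀G, mul_mem hτsym hσ₀sym, fun a ha b hb => ?_⟩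
    have hal' : σ₀ a ∈ Γ.left := (hσ₀sym.1 a).mpr ha
    have hbr' : σ₀ b ∈ Γ.right := (hσ₀sym.2 b).mpr hb
    have hT := hτsw (σ₀ a) hal' (σ₀ b) hbr'
    have hA := hσ₀sw a ha b hb
    have hae : σ₀ a ∈ ({σ₀ v} : Set V) ↔ a = v := by
      simp only [Set.mem_singleton_iff]
      exact ⟨fun h => σ₀.injective h, fun h => h ▸ rfl⟩
    have hbe : σ₀ b ∈ ({σ₀ v} : Set V) ↔ b = v := by
      simp only [Set.mem_singleton_iff]
      exact ⟨fun h => σ₀.injective h, fun h => h ▸ rfl⟩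
    have hmem : ∀ x : V, x ∈ (↑(insert v A₀) : Set V) ↔ (x = v ∨ x ∈ (↑A₀ : Set V)) := by
      intro x; simp
    have hgoal : Γ.adj ((τ * σ₀) a) ((τ * σ₀) b) ↔ Γ.adj (τ (σ₀ a)) (τ (σ₀ b)) := Iff.rfl
    simp only [BipartiteGraph.adjT, hae, hbe] at hT hA
    simp only [BipartiteGraph.adjT, hmem a, hmem b]
    rw [hgoal, hT]
    exact iff_switch_step hA (fun h => h ▸ (by simpa using hv)) (fun h => h ▸ (by simpa using hv))

/-- Any finite partial isomorphism onto the `A`-twisted graph (`A` finite)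
extends to a member of the switch group which is a global `A`-switch. -/
lemma exists_switch_extending (hΓ : Γ.IsRandom) (A : Finset V) (P : PartIso Γ ↑A) :
    ∃ σ : Equiv.Perm V, σ ∈ Γ.switchGroup {BSide.l, BSide.r} ∧ σ ∈ Γ.symLR ∧
      Γ.SwTo σ ↑A ∧ ∀ z ∈ P.D, σ z = P.f z := by
  classical
  obtain ⟨σ₁, hσ₁G, hσ₁sym, hσ₁sw⟩ := exists_global_switch hΓ A
  -- transport `P` along `σ₁⁻¹` to a partial automorphism
  have hQinj : Set.InjOn (fun x => P.f (σ₁⁻¹ x)) ↑(P.D.image σ₁) := by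
    intro x hx x' hx' h
    simp only [Finset.coe_image, Set.mem_image, Finset.mem_coe] at hx hx'
    obtain ⟨z, hz, rfl⟩ := hx
    obtain ⟨z', hz', rfl⟩ := hx'
    simp only [Equiv.Perm.inv_apply_self] at h
    exact congrArg σ₁ (P.inj hz hz' h)
  have hQmem : ∀ x ∈ P.D.image σ₁, σ₁⁻¹ x ∈ P.D ∧ σ₁ (σ₁⁻¹ x) = x := by
    intro x hx
    obtain ⟨z, hz, rfl⟩ := Finset.mem_image.mp hx
    simp only [Equiv.Perm.inv_apply_self]
    exact ⟨hz, by trivial⟩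
  have hσ₁L : ∀ x : V, σ₁⁻¹ x ∈ Γ.left ↔ x ∈ Γ.left := by
    intro x
    have := (Subgroup.inv_mem Γ.symLR hσ₁sym).1 x
    exact this
  have hσ₁R : ∀ x : V, σ₁⁻¹ x ∈ Γ.right ↔ x ∈ Γ.right := by
    intro x
    exact (Subgroup.inv_mem Γ.symLR hσ₁sym).2 x
  set Q : PartIso Γ (∅ : Set V) :=
    { D := P.D.image σ₁
      f := fun x => P.f (σ₁⁻¹ x)
      inj := hQinj
      sideL := by
        intro x hx
        obtain ⟨hzD, _⟩ := hQmem x hx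
        exact (hσ₁L x).symm.trans (P.sideL _ hzD)
      sideR := by
        intro x hx
        obtain ⟨hzD, _⟩ := hQmem x hx
        exact (hσ₁R x).symm.trans (P.sideR _ hzD)
      iso := by
        intro a ha hal b hb hbr
        obtain ⟨haD, hae⟩ := hQmem a ha
        obtain ⟨hbD, hbe⟩ := hQmem b hb
        have hal' : σ₁⁻¹ a ∈ Γ.left := (hσ₁L a).mpr hal
        have hbr' : σ₁⁻¹ b ∈ Γ.right := (hσ₁R b).mpr hbr
        have h1 := P.iso _ haD hal' _ hbD hbr'
        have h2 := hσ₁sw _ hal' _ hbr'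
        rw [hae, hbe] at h2
        rw [adjT_empty]
        rw [h1, ← h2] } with hQ
  obtain ⟨α, hαsym, hαagr, hαsw⟩ := exists_perm_of_partIso hΓ (extTw_empty hΓ) Q
  have hαaut : α ∈ Γ.autGroup := by
    refine mem_autGroup_of hαsym (fun a ha b hb => ?_)
    have := hαsw a ha b hb
    rwa [adjT_empty] at this
  refine ⟨α * σ₁, mul_mem (autGroup_le_switchGroup _ hαaut) hσ₁G,
    mul_mem hαsym hσ₁sym, fun a ha b hb => ?_, fun z hz => ?_⟩
  · have hal' : σ₁ a ∈ Γ.left := (hσ₁sym.1 a).mpr ha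
    have hbr' : σ₁ b ∈ Γ.right := (hσ₁sym.2 b).mpr hb
    have h1 := hαsw (σ₁ a) hal' (σ₁ b) hbr'
    rw [adjT_empty] at h1
    have h2 := hσ₁sw a ha b hb
    exact h1.trans h2
  · have hzQ : σ₁ z ∈ Q.D := Finset.mem_image_of_mem _ hz
    have : (α * σ₁) z = α (σ₁ z) := rfl
    rw [this, hαagr _ hzQ]
    show P.f (σ₁⁻¹ (σ₁ z)) = P.f z
    rw [Equiv.Perm.inv_apply_self]

variable (Γ) in
/-- `g` acts as a switch with respect to some finite `A ⊆ Z` on every finite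
set `Z`. -/
def FinSwOn (g : Equiv.Perm V) : Prop :=
  ∀ Z : Finset V, ∃ A : Finset V, A ⊆ Z ∧ ∀ a ∈ Z, a ∈ Γ.left → ∀ b ∈ Z, b ∈ Γ.right →
    (Γ.adj (g a) (g b) ↔ Γ.adjT ↑A a b)

lemma iff_comp_step {t s p B1 B2 A1 A2 : Prop} (h1 : t ↔ (s ↔ (A1 ↔ A2)))
    (h2 : s ↔ (p ↔ (B1 ↔ B2))) :
    (t ↔ (p ↔ (¬(B1 ↔ A1) ↔ ¬(B2 ↔ A2)))) := by tauto

lemma iff_inv_step {p s c1 c2 : Prop} (h : p ↔ (s ↔ (c1 ↔ c2))) :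
    (s ↔ (p ↔ (c1 ↔ c2))) := by tauto

variable (Γ) in
/-- The subgroup of side-preserving permutations acting as a finite switch on
every finite set. -/
noncomputable def finSwGroup : Subgroup (Equiv.Perm V) where
  carrier := {g | g ∈ Γ.symLR ∧ Γ.FinSwOn g}
  one_mem' := by
    refine ⟨Subgroup.one_mem _, fun Z => ⟨∅, Finset.empty_subset _, ?_⟩⟩
    intro a _ _ b _ _
    simp [BipartiteGraph.adjT]
  mul_mem' := by
    rintro a b ⟨hasym, haF⟩ ⟨hbsym, hbF⟩
    refine ⟨mul_mem hasym hbsym, fun Z => ?_⟩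
    classical
    obtain ⟨B, hBZ, hB⟩ := hbF Z
    obtain ⟨A', hA'Z, hA'⟩ := haF (Z.image b)
    refine ⟨Z.filter (fun x => ¬(x ∈ B ↔ b x ∈ A')), Finset.filter_subset _ _, ?_⟩
    intro x hx hxl y hy hyr
    have hbxl : b x ∈ Γ.left := (hbsym.1 x).mpr hxl
    have hbyr : b y ∈ Γ.right := (hbsym.2 y).mpr hyr
    have h1 := hA' (b x) (Finset.mem_image_of_mem b hx) hbxl
      (b y) (Finset.mem_image_of_mem b hy) hbyr
    have h2 := hB x hx hxl y hy hyr
    simp only [BipartiteGraph.adjT] at h1 h2 ⊢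
    have hgoal : Γ.adj ((a * b) x) ((a * b) y) ↔ Γ.adj (a (b x)) (a (b y)) := Iff.rfl
    rw [hgoal]
    have hcx : x ∈ (↑(Z.filter (fun x => ¬(x ∈ B ↔ b x ∈ A'))) : Set V) ↔
        ¬(x ∈ (↑B : Set V) ↔ b x ∈ (↑A' : Set V)) := by
      simp only [Finset.coe_filter, Set.mem_setOf_eq, Finset.mem_coe]
      constructor
      · rintro ⟨_, h⟩; exact h
      · intro h; exact ⟨hx, h⟩
    have hcy : y ∈ (↑(Z.filter (fun x => ¬(x ∈ B ↔ b x ∈ A'))) : Set V) ↔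
        ¬(y ∈ (↑B : Set V) ↔ b y ∈ (↑A' : Set V)) := by
      simp only [Finset.coe_filter, Set.mem_setOf_eq, Finset.mem_coe]
      constructor
      · rintro ⟨_, h⟩; exact h
      · intro h; exact ⟨hy, h⟩
    rw [hcx, hcy]
    exact iff_comp_step h1 h2
  inv_mem' := by
    rintro a ⟨hasym, haF⟩
    refine ⟨inv_mem hasym, fun Z => ?_⟩
    classical
    obtain ⟨A, hAZ, hA⟩ := haF (Z.image (a⁻¹ : Equiv.Perm V))
    refine ⟨Z.filter (fun x => (a⁻¹ : Equiv.Perm V) x ∈ A), Finset.filter_subset _ _, ?_⟩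
    intro x hx hxl y hy hyr
    have hsym' := Subgroup.inv_mem Γ.symLR hasym
    have hxl' : (a⁻¹ : Equiv.Perm V) x ∈ Γ.left := (hsym'.1 x).mpr hxl
    have hyr' : (a⁻¹ : Equiv.Perm V) y ∈ Γ.right := (hsym'.2 y).mpr hyr
    have h1 := hA _ (Finset.mem_image_of_mem _ hx) hxl' _ (Finset.mem_image_of_mem _ hy) hyr'
    rw [Equiv.Perm.apply_inv_self, Equiv.Perm.apply_inv_self] at h1
    simp only [BipartiteGraph.adjT] at h1 ⊢
    have hcx : x ∈ (↑(Z.filter (fun x => (a⁻¹ : Equiv.Perm V) x ∈ A)) : Set V) ↔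
        (a⁻¹ : Equiv.Perm V) x ∈ (↑A : Set V) := by
      simp only [Finset.coe_filter, Set.mem_setOf_eq, Finset.mem_coe]
      constructor
      · rintro ⟨_, h⟩; exact h
      · intro h; exact ⟨hx, h⟩
    have hcy : y ∈ (↑(Z.filter (fun x => (a⁻¹ : Equiv.Perm V) x ∈ A)) : Set V) ↔
        (a⁻¹ : Equiv.Perm V) y ∈ (↑A : Set V) := by
      simp only [Finset.coe_filter, Set.mem_setOf_eq, Finset.mem_coe]
      constructor
      · rintro ⟨_, h⟩; exact h
      · intro h; exact ⟨hy, h⟩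
    rw [hcx, hcy]
    exact iff_inv_step h1

lemma isClosed_finSwGroup : IsClosedSubgroup (Γ.finSwGroup) := by
  intro g hg
  constructor
  · apply isClosed_symLR
    intro F
    obtain ⟨h, hh, hagr⟩ := hg F
    exact ⟨h, hh.1, hagr⟩
  · intro Z
    obtain ⟨h, hh, hagr⟩ := hg Z
    obtain ⟨A, hAZ, hA⟩ := hh.2 Z
    refine ⟨A, hAZ, ?_⟩
    intro x hx hxl y hy hyr
    rw [← hagr x hx, ← hagr y hy]
    exact hA x hx hxl y hy hyr

lemma switchGroup_le_finSwGroup : Γ.switchGroup {BSide.l, BSide.r} ≤ Γ.finSwGroup := by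
  apply closedClosure_le isClosed_finSwGroup
  rintro g (hg | hg)
  · refine ⟨hg.1, fun Z => ⟨∅, Finset.empty_subset _, ?_⟩⟩
    intro x _ _ y _ _
    simp only [BipartiteGraph.adjT]
    simp [(hg.2 x y).symm]
  · classical
    obtain ⟨i, _, v, _, hsw⟩ := hg
    obtain ⟨hsym, hswto⟩ := isSwitch_iff.mp hsw
    refine ⟨hsym, fun Z => ?_⟩
    by_cases hv : v ∈ Z
    · refine ⟨{v}, Finset.singleton_subset_iff.mpr hv, ?_⟩
      intro x hx hxl y hy hyr
      have := hswto x hxl y hyr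
      simpa using this
    · refine ⟨∅, Finset.empty_subset _, ?_⟩
      intro x hx hxl y hy hyr
      have := hswto x hxl y hyr
      have hxv : x ≠ v := fun h => hv (h ▸ hx)
      have hyv : y ≠ v := fun h => hv (h ▸ hy)
      simp only [BipartiteGraph.adjT, Set.mem_singleton_iff] at this ⊢
      simp [hxv, hyv] at this
      simp [this]

lemma finSwOn_of_mem_switchGroup {g : Equiv.Perm V}
    (hg : g ∈ Γ.switchGroup {BSide.l, BSide.r}) : Γ.FinSwOn g :=
  (switchGroup_le_finSwGroup hg).2

set_option maxHeartbeats 1600000 in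
lemma iff_peel {q t p ra rb ea eb : Prop} (h1 : q ↔ (t ↔ (ra ↔ rb)))
    (h2 : q ↔ (p ↔ ((ra ∨ ea) ↔ (rb ∨ eb)))) (hra : ra → ¬ea) (hrb : rb → ¬eb) :
    t ↔ (p ↔ (ea ↔ eb)) := by tauto

lemma coe_inter_left [DecidablePred (· ∈ Γ.left)] (Y : Finset V) :
    (↑Y : Set V) ∩ Γ.left = ↑(Y.filter (· ∈ Γ.left)) := by
  ext x; simp [Finset.mem_filter]

lemma coe_inter_right [DecidablePred (· ∈ Γ.right)] (Y : Finset V) :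
    (↑Y : Set V) ∩ Γ.right = ↑(Y.filter (· ∈ Γ.right)) := by
  ext x; simp [Finset.mem_filter]

/-- The peeling lemma: if `φ` lies in the switch group and acts on `Z` as a
switch with respect to the finite set `A ⊆ Z`, and the two sides of `Z` have
enough vertices outside `A`, then we can peel off the vertices of `A` one by
one, producing the tail of an `(m × n)`-analysis. -/
lemma peel [DecidableEq V] [DecidablePred (· ∈ Γ.left)] [DecidablePred (· ∈ Γ.right)]
    (hΓ : Γ.IsRandom) (Z : Finset V) (m n : ℕ) (hm : 0 < m) (hn : 0 < n) :
    ∀ (k : ℕ) (A : Finset V) (φ : Equiv.Perm V), A.card ≤ k → A ⊆ Z →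
      φ ∈ Γ.switchGroup {BSide.l, BSide.r} →
      (∀ a ∈ Z, a ∈ Γ.left → ∀ b ∈ Z, b ∈ Γ.right →
        (Γ.adj (φ a) (φ b) ↔ Γ.adjT ↑A a b)) →
      m ≤ ((Z.filter (· ∈ Γ.left)) \ A).card →
      n ≤ ((Z.filter (· ∈ Γ.right)) \ A).card →
      ∃ (s : ℕ) (c : ℕ → Equiv.Perm V), c 0 = φ ∧
        (∀ j ≤ s, c j ∈ Γ.switchGroup {BSide.l, BSide.r}) ∧
        (∀ j < s, ∃ Y : Finset V, Y ⊆ Z ∧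
          ((Y : Set V) ∩ Γ.left).ncard = m ∧ ((Y : Set V) ∩ Γ.right).ncard = n ∧
          ∃ θj ∈ Γ.switchGroup {BSide.l, BSide.r},
            (θj ∈ Γ.autGroup ∨ ∃ v ∈ Y, Γ.IsSwitch θj {v}) ∧
            (∀ x ∈ Y, θj x = compSeq c j x) ∧
            (∀ x ∈ Z, c (j + 1) (compSeq c j x) = θj⁻¹ (compSeq c j x))) ∧
        ((∀ x ∈ Z, (x ∈ Γ.left ↔ compSeq c s x ∈ Γ.left) ∧
            (x ∈ Γ.right ↔ compSeq c s x ∈ Γ.right)) ∧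
          ∀ a ∈ (Z : Set V) ∩ Γ.left, ∀ b ∈ (Z : Set V) ∩ Γ.right,
            (Γ.adj a b ↔ Γ.adj (compSeq c s a) (compSeq c s b))) := by
  -- the base case, `A = ∅`
  have base : ∀ φ : Equiv.Perm V, φ ∈ Γ.switchGroup {BSide.l, BSide.r} →
      (∀ a ∈ Z, a ∈ Γ.left → ∀ b ∈ Z, b ∈ Γ.right →
        (Γ.adj (φ a) (φ b) ↔ Γ.adjT (↑(∅ : Finset V)) a b)) →
      ∃ (s : ℕ) (c : ℕ → Equiv.Perm V), c 0 = φ ∧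
        (∀ j ≤ s, c j ∈ Γ.switchGroup {BSide.l, BSide.r}) ∧
        (∀ j < s, ∃ Y : Finset V, Y ⊆ Z ∧
          ((Y : Set V) ∩ Γ.left).ncard = m ∧ ((Y : Set V) ∩ Γ.right).ncard = n ∧
          ∃ θj ∈ Γ.switchGroup {BSide.l, BSide.r},
            (θj ∈ Γ.autGroup ∨ ∃ v ∈ Y, Γ.IsSwitch θj {v}) ∧
            (∀ x ∈ Y, θj x = compSeq c j x) ∧
            (∀ x ∈ Z, c (j + 1) (compSeq c j x) = θj⁻¹ (compSeq c j x))) ∧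
        ((∀ x ∈ Z, (x ∈ Γ.left ↔ compSeq c s x ∈ Γ.left) ∧
            (x ∈ Γ.right ↔ compSeq c s x ∈ Γ.right)) ∧
          ∀ a ∈ (Z : Set V) ∩ Γ.left, ∀ b ∈ (Z : Set V) ∩ Γ.right,
            (Γ.adj a b ↔ Γ.adj (compSeq c s a) (compSeq c s b))) := by
    intro φ hφG hbehav
    have hφsym := switchGroup_le_symLR _ hφG
    refine ⟨0, fun _ => φ, rfl, fun j _ => hφG, fun j hj => absurd hj (Nat.not_lt_zero j),
      fun x hx => ⟨(hφsym.1 x).symm, (hφsym.2 x).symm⟩, fun a ha b hb => ?_⟩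
    obtain ⟨haZ, hal⟩ := ha
    obtain ⟨hbZ, hbr⟩ := hb
    have := hbehav a haZ hal b hbZ hbr
    simp only [BipartiteGraph.adjT, Finset.coe_empty, Set.mem_empty_iff_false] at this
    show Γ.adj a b ↔ Γ.adj (φ a) (φ b)
    rw [this]; tauto
  intro k
  induction k with
  | zero =>
    intro A φ hcard hAZ hφG hbehav _ _
    obtain rfl : A = ∅ := Finset.card_eq_zero.mp (Nat.le_zero.mp hcard)
    exact base φ hφG hbehav
  | succ k IHk =>
    intro A φ hcard hAZ hφG hbehav hmL hnR
    rcases A.eq_empty_or_nonempty with rfl | hne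
    · exact base φ hφG hbehav
    obtain ⟨v, hv⟩ := hne
    have hφsym := switchGroup_le_symLR _ hφG
    have hvZ : v ∈ Z := hAZ hv
    -- construct the (m × n)-subgraph Y with Y ∩ A = {v}
    have hYex : ∃ Y : Finset V, Y ⊆ Z ∧
        ((Y : Set V) ∩ Γ.left).ncard = m ∧ ((Y : Set V) ∩ Γ.right).ncard = n ∧
        v ∈ Y ∧ (∀ x ∈ Y, x ∈ A ↔ x = v) := by
      rcases mem_side_total (Γ := Γ) v with hvl | hvr
      · obtain ⟨Lrest, hLsub, hLcard⟩ :=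
          Finset.exists_subset_card_eq (show m - 1 ≤ ((Z.filter (· ∈ Γ.left)) \ A).card by omega)
        obtain ⟨Yr, hYrsub, hYrcard⟩ := Finset.exists_subset_card_eq hnR
        have hvL : v ∉ Lrest := fun h => (Finset.mem_sdiff.mp (hLsub h)).2 hv
        set Yl := insert v Lrest with hYl
        have hYlcard : Yl.card = m := by
          rw [hYl, Finset.card_insert_of_notMem hvL, hLcard]; omega
        refine ⟨Yl ∪ Yr, ?_, ?_, ?_, Finset.mem_union_left _ (Finset.mem_insert_self _ _), ?_⟩
        · intro x hx
          rcases Finset.mem_union.mp hx with hx | hx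
          · rcases Finset.mem_insert.mp hx with rfl | hx
            · exact hvZ
            · exact Finset.mem_of_mem_filter x (Finset.mem_sdiff.mp (hLsub hx)).1
          · exact Finset.mem_of_mem_filter x (Finset.mem_sdiff.mp (hYrsub hx)).1
        · have hmemL : ∀ x ∈ Yl, x ∈ Γ.left := by
            intro x hx
            rcases Finset.mem_insert.mp hx with rfl | hx
            · exact hvl
            · exact (Finset.mem_filter.mp (Finset.mem_sdiff.mp (hLsub hx)).1).2
          have hmemR : ∀ x ∈ Yr, x ∈ Γ.right := fun x hx =>
            (Finset.mem_filter.mp (Finset.mem_sdiff.mp (hYrsub hx)).1).2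
          have : (↑(Yl ∪ Yr) : Set V) ∩ Γ.left = ↑Yl := by
            ext x
            simp only [Set.mem_inter_iff, Finset.coe_union, Set.mem_union, Finset.mem_coe]
            constructor
            · rintro ⟨hx | hx, hxl⟩
              · exact hx
              · exact absurd hxl (not_left_of_right (hmemR x hx))
            · intro hx; exact ⟨Or.inl hx, hmemL x hx⟩
          rw [this, Set.ncard_coe_finset, hYlcard]
        · have hmemL : ∀ x ∈ Yl, x ∈ Γ.left := by
            intro x hx
            rcases Finset.mem_insert.mp hx with rfl | hx
            · exact hvl
            · exact (Finset.mem_filter.mp (Finset.mem_sdiff.mp (hLsub hx)).1).2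
          have hmemR : ∀ x ∈ Yr, x ∈ Γ.right := fun x hx =>
            (Finset.mem_filter.mp (Finset.mem_sdiff.mp (hYrsub hx)).1).2
          have : (↑(Yl ∪ Yr) : Set V) ∩ Γ.right = ↑Yr := by
            ext x
            simp only [Set.mem_inter_iff, Finset.coe_union, Set.mem_union, Finset.mem_coe]
            constructor
            · rintro ⟨hx | hx, hxr⟩
              · exact absurd hxr (not_right_of_left (hmemL x hx))
              · exact hx
            · intro hx; exact ⟨Or.inr hx, hmemR x hx⟩
          rw [this, Set.ncard_coe_finset, hYrcard]
        · intro x hx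
          rcases Finset.mem_union.mp hx with hx | hx
          · rcases Finset.mem_insert.mp hx with rfl | hx
            · exact iff_of_true hv rfl
            · refine iff_of_false (Finset.mem_sdiff.mp (hLsub hx)).2 (fun h => hvL (h ▸ hx))
          · refine iff_of_false (Finset.mem_sdiff.mp (hYrsub hx)).2
              (fun h => (Finset.mem_sdiff.mp (hYrsub hx)).2 (h ▸ hv))
      · obtain ⟨Rrest, hRsub, hRcard⟩ :=
          Finset.exists_subset_card_eq (show n - 1 ≤ ((Z.filter (· ∈ Γ.right)) \ A).card by omega)
        obtain ⟨Yl, hYlsub, hYlcard⟩ := Finset.exists_subset_card_eq hmL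
        have hvR : v ∉ Rrest := fun h => (Finset.mem_sdiff.mp (hRsub h)).2 hv
        set Yr := insert v Rrest with hYr
        have hYrcard : Yr.card = n := by
          rw [hYr, Finset.card_insert_of_notMem hvR, hRcard]; omega
        refine ⟨Yl ∪ Yr, ?_, ?_, ?_, Finset.mem_union_right _ (Finset.mem_insert_self _ _), ?_⟩
        · intro x hx
          rcases Finset.mem_union.mp hx with hx | hx
          · exact Finset.mem_of_mem_filter x (Finset.mem_sdiff.mp (hYlsub hx)).1
          · rcases Finset.mem_insert.mp hx with rfl | hx
            · exact hvZ
            · exact Finset.mem_of_mem_filter x (Finset.mem_sdiff.mp (hRsub hx)).1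
        · have hmemR : ∀ x ∈ Yr, x ∈ Γ.right := by
            intro x hx
            rcases Finset.mem_insert.mp hx with rfl | hx
            · exact hvr
            · exact (Finset.mem_filter.mp (Finset.mem_sdiff.mp (hRsub hx)).1).2
          have hmemL : ∀ x ∈ Yl, x ∈ Γ.left := fun x hx =>
            (Finset.mem_filter.mp (Finset.mem_sdiff.mp (hYlsub hx)).1).2
          have : (↑(Yl ∪ Yr) : Set V) ∩ Γ.left = ↑Yl := by
            ext x
            simp only [Set.mem_inter_iff, Finset.coe_union, Set.mem_union, Finset.mem_coe]
            constructor
            · rintro ⟨hx | hx, hxl⟩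
              · exact hx
              · exact absurd hxl (not_left_of_right (hmemR x hx))
            · intro hx; exact ⟨Or.inl hx, hmemL x hx⟩
          rw [this, Set.ncard_coe_finset, hYlcard]
        · have hmemR : ∀ x ∈ Yr, x ∈ Γ.right := by
            intro x hx
            rcases Finset.mem_insert.mp hx with rfl | hx
            · exact hvr
            · exact (Finset.mem_filter.mp (Finset.mem_sdiff.mp (hRsub hx)).1).2
          have hmemL : ∀ x ∈ Yl, x ∈ Γ.left := fun x hx =>
            (Finset.mem_filter.mp (Finset.mem_sdiff.mp (hYlsub hx)).1).2
          have : (↑(Yl ∪ Yr) : Set V) ∩ Γ.right = ↑Yr := by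
            ext x
            simp only [Set.mem_inter_iff, Finset.coe_union, Set.mem_union, Finset.mem_coe]
            constructor
            · rintro ⟨hx | hx, hxr⟩
              · exact absurd hxr (not_right_of_left (hmemL x hx))
              · exact hx
            · intro hx; exact ⟨Or.inr hx, hmemR x hx⟩
          rw [this, Set.ncard_coe_finset, hYrcard]
        · intro x hx
          rcases Finset.mem_union.mp hx with hx | hx
          · refine iff_of_false (Finset.mem_sdiff.mp (hYlsub hx)).2
              (fun h => (Finset.mem_sdiff.mp (hYlsub hx)).2 (h ▸ hv))
          · rcases Finset.mem_insert.mp hx with rfl | hx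
            · exact iff_of_true hv rfl
            · refine iff_of_false (Finset.mem_sdiff.mp (hRsub hx)).2 (fun h => hvR (h ▸ hx))
    obtain ⟨Y, hYZ, hYm, hYn, hvY, hYA⟩ := hYex
    -- the singleton switch θ₀ agreeing with φ on Y
    have hPiso : ∀ a ∈ Y, a ∈ Γ.left → ∀ b ∈ Y, b ∈ Γ.right →
        (Γ.adj (φ a) (φ b) ↔ Γ.adjT (↑({v} : Finset V)) a b) := by
      intro a ha hal b hb hbr
      have h1 := hbehav a (hYZ ha) hal b (hYZ hb) hbr
      have ha' : a ∈ (↑A : Set V) ↔ a = v := hYA a ha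
      have hb' : b ∈ (↑A : Set V) ↔ b = v := hYA b hb
      simp only [BipartiteGraph.adjT, Finset.coe_singleton, Set.mem_singleton_iff] at h1 ⊢
      rw [h1, ha', hb']
    obtain ⟨θ₀, hθ₀G, hθ₀sym, hθ₀sw, hθ₀agr⟩ := exists_switch_extending hΓ {v}
      { D := Y
        f := φ
        inj := fun x _ y _ h => φ.injective h
        sideL := fun x _ => (hφsym.1 x).symm
        sideR := fun x _ => (hφsym.2 x).symm
        iso := hPiso }
    have hθ₀v : θ₀ v = φ v := hθ₀agr v hvY
    have hθ₀switch : Γ.IsSwitch θ₀ {v} := by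
      rw [isSwitch_iff]
      refine ⟨hθ₀sym, ?_⟩
      have := hθ₀sw
      rwa [Finset.coe_singleton] at this
    -- the peeled permutation
    set φ' : Equiv.Perm V := θ₀⁻¹ * φ with hφ'
    have hφ'G : φ' ∈ Γ.switchGroup {BSide.l, BSide.r} := mul_mem (inv_mem hθ₀G) hφG
    have hφ'sym := switchGroup_le_symLR _ hφ'G
    have hφ'v : φ' v = v := by
      rw [hφ']
      show θ₀⁻¹ (φ v) = v
      rw [← hθ₀v, Equiv.Perm.inv_apply_self]
    have hφ'eq : ∀ x : V, φ' x = v ↔ x = v := by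
      intro x
      constructor
      · intro h; exact φ'.injective (h.trans hφ'v.symm)
      · intro h; exact h ▸ hφ'v
    have hφ'behav : ∀ a ∈ Z, a ∈ Γ.left → ∀ b ∈ Z, b ∈ Γ.right →
        (Γ.adj (φ' a) (φ' b) ↔ Γ.adjT (↑(A.erase v)) a b) := by
      intro a haZ hal b hbZ hbr
      have hal' : φ' a ∈ Γ.left := (hφ'sym.1 a).mpr hal
      have hbr' : φ' b ∈ Γ.right := (hφ'sym.2 b).mpr hbr
      have h1 := hθ₀sw (φ' a) hal' (φ' b) hbr'
      have hth : ∀ x : V, θ₀ (φ' x) = φ x := by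
        intro x
        show θ₀ (θ₀⁻¹ (φ x)) = φ x
        rw [Equiv.Perm.apply_inv_self]
      rw [hth a, hth b] at h1
      simp only [BipartiteGraph.adjT, Finset.coe_singleton, Set.mem_singleton_iff,
        hφ'eq a, hφ'eq b] at h1
      have h2 := hbehav a haZ hal b hbZ hbr
      simp only [BipartiteGraph.adjT] at h2 ⊢
      have hmA : ∀ x : V, x ∈ (↑A : Set V) ↔ (x = v ∨ x ∈ (↑(A.erase v) : Set V)) := by
        intro x
        simp only [Finset.coe_erase, Set.mem_diff, Finset.mem_coe, Set.mem_singleton_iff]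
        constructor
        · intro hx
          by_cases hxv : x = v
          · exact Or.inl hxv
          · exact Or.inr ⟨hx, hxv⟩
        · rintro (rfl | ⟨hx, _⟩)
          · exact hv
          · exact hx
      rw [hmA a, hmA b] at h2
      have hea : a = v → a ∉ (↑(A.erase v) : Set V) := by
        rintro rfl
        simp
      have heb : b = v → b ∉ (↑(A.erase v) : Set V) := by
        rintro rfl
        simp
      exact iff_peel h1 h2 hea heb
    -- apply the induction hypothesis to the smaller set
    have hcard' : (A.erase v).card ≤ k := by
      have := Finset.card_erase_of_mem hv
      omega
    have hsubL : ((Z.filter (· ∈ Γ.left)) \ A) ⊆ ((Z.filter (· ∈ Γ.left)) \ A.erase v) :=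
      Finset.sdiff_subset_sdiff (le_refl _) (Finset.erase_subset _ _)
    have hsubR : ((Z.filter (· ∈ Γ.right)) \ A) ⊆ ((Z.filter (· ∈ Γ.right)) \ A.erase v) :=
      Finset.sdiff_subset_sdiff (le_refl _) (Finset.erase_subset _ _)
    obtain ⟨s', c', hc'0, hc'mem, hc'steps, hc'sides, hc'iso⟩ :=
      IHk (A.erase v) φ' hcard' ((Finset.erase_subset _ _).trans hAZ) hφ'G hφ'behav
        (le_trans hmL (Finset.card_le_card hsubL))
        (le_trans hnR (Finset.card_le_card hsubR))
    -- assemble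
    refine ⟨s' + 1, fun j => match j with
      | 0 => φ
      | 1 => θ₀⁻¹
      | (j + 2) => c' (j + 1), rfl, ?_, ?_, ?_, ?_⟩
    all_goals
      set c : ℕ → Equiv.Perm V := fun j => match j with
        | 0 => φ
        | 1 => θ₀⁻¹
        | (j + 2) => c' (j + 1) with hc
    case _ =>
      intro j hj
      match j with
      | 0 => exact hφG
      | 1 => exact inv_mem hθ₀G
      | (j + 2) => exact hc'mem (j + 1) (by omega)
    all_goals
      have hcomp : ∀ (j : ℕ) (x : V), compSeq c (j + 1) x = compSeq c' j x := by
        intro j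
        induction j with
        | zero =>
          intro x
          show c 1 (c 0 x) = c' 0 x
          rw [hc'0]
          rfl
        | succ j IHj =>
          intro x
          show c (j + 2) (compSeq c (j + 1) x) = c' (j + 1) (compSeq c' j x)
          rw [IHj x]
    case _ =>
      intro j hj
      match j with
      | 0 =>
        refine ⟨Y, hYZ, hYm, hYn, θ₀, hθ₀G, Or.inr ⟨v, hvY, hθ₀switch⟩,
          fun x hx => hθ₀agr x hx, fun x hx => rfl⟩
      | (j + 1) =>
        obtain ⟨Y', hY'Z, hY'm, hY'n, θ', hθ'G, hθ'or, hθ'agr, hθ'step⟩ :=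
          hc'steps j (by omega)
        refine ⟨Y', hY'Z, hY'm, hY'n, θ', hθ'G, hθ'or, fun x hx => ?_, fun x hx => ?_⟩
        · rw [hcomp j x]
          exact hθ'agr x hx
        · show c (j + 2) (compSeq c (j + 1) x) = θ'⁻¹ (compSeq c (j + 1) x)
          rw [hcomp j x]
          exact hθ'step x hx
    case _ =>
      intro x hx
      rw [hcomp s' x]
      exact hc'sides x hx
    case _ =>
      intro a ha b hb
      rw [hcomp s' a, hcomp s' b]
      exact hc'iso a ha b hb

end BipartiteGraph

lemma iff_rep {G p qa qb Ba Bb c1 c2 : Prop} (h1 : G ↔ (p ↔ (qa ↔ qb)))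
    (h2 : Ba ↔ (qa ↔ c1)) (h3 : Bb ↔ (qb ↔ c2)) (hc : c1 ↔ c2) :
    G ↔ (p ↔ (Ba ↔ Bb)) := by tauto

lemma iff_rep_flip {G p qa qb Ba Bb c1 c2 : Prop} (h1 : G ↔ (p ↔ (qa ↔ qb)))
    (h2 : Ba ↔ (qa ↔ c1)) (h3 : Bb ↔ (qb ↔ c2)) (hc : ¬(c1 ↔ c2)) :
    G ↔ ¬(p ↔ (Ba ↔ Bb)) := by tauto

lemma iff_anti {F G X L R : Prop} (h1 : F ↔ X) (h2 : G ↔ ¬X) (hL : L) (hR : ¬R) :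
    F ↔ (G ↔ (L ↔ R)) := by tauto

lemma iff_anti2 {T p L R : Prop} (h : T ↔ (p ↔ (L ↔ R))) (hL : L) (hR : ¬R) :
    p ↔ ¬T := by tauto

lemma bool_ne_iff {cl cr : Bool} (h : ¬ cl = cr) : ¬((cl = false) ↔ (cr = false)) := by
  cases cl <;> cases cr <;> simp_all

set_option maxHeartbeats 2000000 in
/-- **Theorem 4.2.** Let `m, n > 2`.  There exists an integer `s(m, n)` such
that every `f ∈ F(S_{l,r}(Γ))` (represented as the restriction of a member `g`
of `S_{l,r}(Γ)` to a finite set `Z`) whose domain has at least `s(m, n)`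
vertices on each side admits an `(m × n)`-analysis. -/
theorem exists_mn_analysis {V : Type*} (Γ : BipartiteGraph V) (hΓ : Γ.IsRandom)
    (m n : ℕ) (hm : 2 < m) (hn : 2 < n) :
    ∃ s : ℕ, ∀ g ∈ Γ.switchGroup {BSide.l, BSide.r}, ∀ Z : Finset V,
      s ≤ ((Z : Set V) ∩ Γ.left).ncard → s ≤ ((Z : Set V) ∩ Γ.right).ncard →
      BipartiteGraph.HasMNAnalysis Γ g Z m n := by
  classical
  open BipartiteGraph in
  refine ⟨2 * (m + n), ?_⟩
  intro g hg Z hL hR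
  have hgsym := BipartiteGraph.switchGroup_le_symLR _ hg
  set Zl := Z.filter (· ∈ Γ.left) with hZl
  set Zr := Z.filter (· ∈ Γ.right) with hZr
  have hLcard : 2 * (m + n) ≤ Zl.card := by
    rw [BipartiteGraph.coe_inter_left, Set.ncard_coe_finset] at hL
    exact hL
  have hRcard : 2 * (m + n) ≤ Zr.card := by
    rw [BipartiteGraph.coe_inter_right, Set.ncard_coe_finset] at hR
    exact hR
  obtain ⟨A, hAZ, hA⟩ := BipartiteGraph.finSwOn_of_mem_switchGroup hg Z
  -- choose good representatives on each side
  have hleft : ∃ (Bl : Finset V) (cl : Bool), Bl ⊆ Zl ∧ m + n ≤ (Zl \ Bl).card ∧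
      (∀ a ∈ Zl, (a ∈ Bl ↔ (a ∈ A ↔ cl = false))) := by
    by_cases hcl : 2 * (Zl ∩ A).card ≤ Zl.card
    · refine ⟨Zl ∩ A, false, Finset.inter_subset_left, ?_, ?_⟩
      · rw [Finset.card_sdiff_of_subset Finset.inter_subset_left]
        omega
      · intro a ha
        simp [Finset.mem_inter, ha]
    · refine ⟨Zl \ (Zl ∩ A), true, Finset.sdiff_subset, ?_, ?_⟩
      · rw [Finset.sdiff_sdiff_eq_self Finset.inter_subset_left]
        omega
      · intro a ha
        simp [Finset.mem_sdiff, Finset.mem_inter, ha]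
  have hright : ∃ (Br : Finset V) (cr : Bool), Br ⊆ Zr ∧ m + n ≤ (Zr \ Br).card ∧
      (∀ a ∈ Zr, (a ∈ Br ↔ (a ∈ A ↔ cr = false))) := by
    by_cases hcr : 2 * (Zr ∩ A).card ≤ Zr.card
    · refine ⟨Zr ∩ A, false, Finset.inter_subset_left, ?_, ?_⟩
      · rw [Finset.card_sdiff_of_subset Finset.inter_subset_left]
        omega
      · intro a ha
        simp [Finset.mem_inter, ha]
    · refine ⟨Zr \ (Zr ∩ A), true, Finset.sdiff_subset, ?_, ?_⟩
      · rw [Finset.sdiff_sdiff_eq_self Finset.inter_subset_left]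
        omega
      · intro a ha
        simp [Finset.mem_sdiff, Finset.mem_inter, ha]
  obtain ⟨Bl, cl, hBlZ, hBlcard, hBlmem⟩ := hleft
  obtain ⟨Br, cr, hBrZ, hBrcard, hBrmem⟩ := hright
  set B := Bl ∪ Br with hB
  have hBZ : B ⊆ Z := by
    intro x hx
    rcases Finset.mem_union.mp hx with hx | hx
    · exact Finset.mem_of_mem_filter x (hBlZ hx)
    · exact Finset.mem_of_mem_filter x (hBrZ hx)
  have hBmemL : ∀ a ∈ Z, a ∈ Γ.left → (a ∈ B ↔ (a ∈ A ↔ cl = false)) := by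
    intro a haZ hal
    have haZl : a ∈ Zl := Finset.mem_filter.mpr ⟨haZ, hal⟩
    rw [hB, Finset.mem_union]
    constructor
    · rintro (h | h)
      · exact (hBlmem a haZl).mp h
      · exact absurd ((Finset.mem_filter.mp (hBrZ h)).2)
          (BipartiteGraph.not_right_of_left hal)
    · intro h; exact Or.inl ((hBlmem a haZl).mpr h)
  have hBmemR : ∀ b ∈ Z, b ∈ Γ.right → (b ∈ B ↔ (b ∈ A ↔ cr = false)) := by
    intro b hbZ hbr
    have hbZr : b ∈ Zr := Finset.mem_filter.mpr ⟨hbZ, hbr⟩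
    rw [hB, Finset.mem_union]
    constructor
    · rintro (h | h)
      · exact absurd ((Finset.mem_filter.mp (hBlZ h)).2)
          (BipartiteGraph.not_left_of_right hbr)
      · exact (hBrmem b hbZr).mp h
    · intro h; exact Or.inr ((hBrmem b hbZr).mpr h)
  have hZlB : Zl \ B = Zl \ Bl := by
    ext x
    simp only [Finset.mem_sdiff, hB, Finset.mem_union, not_or]
    constructor
    · rintro ⟨hx, h1, _⟩; exact ⟨hx, h1⟩
    · rintro ⟨hx, h1⟩
      refine ⟨hx, h1, fun h => ?_⟩
      exact (BipartiteGraph.not_right_of_left (Finset.mem_filter.mp hx).2)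
        (Finset.mem_filter.mp (hBrZ h)).2
  have hZrB : Zr \ B = Zr \ Br := by
    ext x
    simp only [Finset.mem_sdiff, hB, Finset.mem_union, not_or]
    constructor
    · rintro ⟨hx, _, h2⟩; exact ⟨hx, h2⟩
    · rintro ⟨hx, h2⟩
      refine ⟨hx, fun h => ?_, h2⟩
      exact (BipartiteGraph.not_left_of_right (Finset.mem_filter.mp hx).2)
        (Finset.mem_filter.mp (hBlZ h)).2
  have hmB : m ≤ (Zl \ B).card := by rw [hZlB]; omega
  have hnB : n ≤ (Zr \ B).card := by rw [hZrB]; omega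
  have hm0 : 0 < m := by omega
  have hn0 : 0 < n := by omega
  -- case on whether a global flip is needed
  by_cases hflip : cl = cr
  · -- no flip : g itself acts as a B-switch on Z
    have hbehavB : ∀ a ∈ Z, a ∈ Γ.left → ∀ b ∈ Z, b ∈ Γ.right →
        (Γ.adj (g a) (g b) ↔ Γ.adjT ↑B a b) := by
      intro a haZ hal b hbZ hbr
      have h1 := hA a haZ hal b hbZ hbr
      have h2 := hBmemL a haZ hal
      have h3 := hBmemR b hbZ hbr
      exact iff_rep h1 (Finset.mem_coe.trans h2) (Finset.mem_coe.trans h3)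
        (by rw [hflip])
    obtain ⟨s, c, hc0, hcmem, hcsteps, hcfinal⟩ :=
      BipartiteGraph.peel hΓ Z m n hm0 hn0 B.card B g le_rfl hBZ hg hbehavB hmB hnB
    refine ⟨s, c, hcmem, ⟨1, ⟨Subgroup.one_mem _, Or.inl (fun a _ b _ => Iff.rfl)⟩,
      fun x _ => by rw [hc0]; rfl⟩, hcsteps, hcfinal⟩
  · -- flip needed
    have hbehavB : ∀ a ∈ Z, a ∈ Γ.left → ∀ b ∈ Z, b ∈ Γ.right →
        (Γ.adj (g a) (g b) ↔ ¬ Γ.adjT ↑B a b) := by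
      intro a haZ hal b hbZ hbr
      have h1 := hA a haZ hal b hbZ hbr
      have h2 := hBmemL a haZ hal
      have h3 := hBmemR b hbZ hbr
      exact iff_rep_flip h1 (Finset.mem_coe.trans h2) (Finset.mem_coe.trans h3)
        (bool_ne_iff hflip)
    -- the global B-switch φ
    obtain ⟨φ, hφG, hφsym, hφsw⟩ := BipartiteGraph.exists_global_switch hΓ B
    -- the anti-automorphism θ with θ ∘ g = φ on Z
    have hgsym' := Subgroup.inv_mem Γ.symLR hgsym
    have hPiso : ∀ a ∈ Z.image g, a ∈ Γ.left → ∀ b ∈ Z.image g, b ∈ Γ.right →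
        (Γ.adj (φ ((g⁻¹ : Equiv.Perm V) a)) (φ ((g⁻¹ : Equiv.Perm V) b)) ↔
          Γ.adjT Γ.left a b) := by
      intro a ha hal b hb hbr
      obtain ⟨za, hzaZ, rfl⟩ := Finset.mem_image.mp ha
      obtain ⟨zb, hzbZ, rfl⟩ := Finset.mem_image.mp hb
      rw [Equiv.Perm.inv_apply_self, Equiv.Perm.inv_apply_self]
      have hzal : za ∈ Γ.left := (hgsym.1 za).mp hal
      have hzbr : zb ∈ Γ.right := (hgsym.2 zb).mp hbr
      have h1 := hφsw za hzal zb hzbr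
      have h2 := hbehavB za hzaZ hzal zb hzbZ hzbr
      have hbl : g zb ∉ Γ.left := BipartiteGraph.not_left_of_right hbr
      exact iff_anti h1 h2 hal hbl
    obtain ⟨θ, hθsym, hθagr, hθsw⟩ := BipartiteGraph.exists_perm_of_partIso hΓ
      (BipartiteGraph.extTw_left hΓ)
      { D := Z.image g
        f := fun x => φ ((g⁻¹ : Equiv.Perm V) x)
        inj := fun x _ y _ h => by
          simp only at h
          exact (g⁻¹ : Equiv.Perm V).injective (φ.injective h)
        sideL := fun x _ => by
          show x ∈ Γ.left ↔ φ ((g⁻¹ : Equiv.Perm V) x) ∈ Γ.left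
          exact ((hφsym.1 _).trans (hgsym'.1 x)).symm
        sideR := fun x _ => by
          show x ∈ Γ.right ↔ φ ((g⁻¹ : Equiv.Perm V) x) ∈ Γ.right
          exact ((hφsym.2 _).trans (hgsym'.2 x)).symm
        iso := hPiso }
    have hθstar : Γ.InAutStar θ := by
      refine ⟨hθsym, Or.inr (fun a hal b hbr => ?_)⟩
      exact iff_anti2 (hθsw a hal b hbr) hal (BipartiteGraph.not_left_of_right hbr)
    obtain ⟨s, c, hc0, hcmem, hcsteps, hcfinal⟩ :=
      BipartiteGraph.peel hΓ Z m n hm0 hn0 B.card B φ le_rfl hBZ hφG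
        (fun a _ hal b _ hbr => hφsw a hal b hbr) hmB hnB
    refine ⟨s, c, hcmem, ⟨θ, hθstar, fun x hx => ?_⟩, hcsteps, hcfinal⟩
    have hgx : g x ∈ Z.image g := Finset.mem_image_of_mem g hx
    rw [hc0, hθagr _ hgx]
    show φ x = φ ((g⁻¹ : Equiv.Perm V) (g x))
    rw [Equiv.Perm.inv_apply_self]
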